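/- arXiv:2211.16142 — 9 statements merged into one kernel-verified Lean document; each statement's English description precedes it below -/
import Mathlib

section
/- Let z = (z̄, z̃) belong to the boundary of the dual generalized power cone (P^α_{m,n})^*, with z ≠ 0 and z̄ ≠ 0. Then necessarily z̃ᵢ > 0 for all i, and the exposed face {z}^⊥ ∩ P^α_{m,n} is the ray generated by f = (-z̄/‖z̄‖², α ∘ z̃^{-1}), i.e., {z}^⊥ ∩ P^α_{m,n} = { t·f : t ≥ 0 }. -/
open Finset

noncomputable section

abbrev E (m n : ℕ) : Type := WithLp 2 (EuclideanSpace ℝ (Fin m) × EuclideanSpace ℝ (Fin n))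

def PowCone (m n : ℕ) (α : Fin n → ℝ) : Set (E m n) :=
  {x | (∀ i, 0 ≤ x.ofLp.2 i) ∧ ‖x.ofLp.1‖ ≤ ∏ i, x.ofLp.2 i ^ α i}

private lemma amgm_eq_case {n : ℕ} (w p : Fin n → ℝ) (hw : ∀ i, 0 < w i)
    (hw1 : ∑ i, w i = 1) (hp : ∀ i, 0 < p i)
    (heq : ∑ i, w i * p i ≤ ∏ i, p i ^ w i) (j k : Fin n) : p j = p k := by
  have hlog : Real.log (∏ i, p i ^ w i) = ∑ i, w i * Real.log (p i) := by
    rw [Real.log_prod (fun i _ => (Real.rpow_pos_of_pos (hp i) _).ne')]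
    exact Finset.sum_congr rfl fun i _ => Real.log_rpow (hp i) _
  have hsumpos : 0 < ∑ i, w i * p i :=
    Finset.sum_pos (fun i _ => mul_pos (hw i) (hp i)) ⟨j, mem_univ j⟩
  have h1 : Real.log (∑ i, w i * p i) ≤ ∑ i, w i * Real.log (p i) := by
    rw [← hlog]; exact Real.log_le_log hsumpos heq
  exact strictConcaveOn_log_Ioi.eq_of_map_sum_eq (fun i _ => hw i) hw1
    (fun i _ => Set.mem_Ioi.2 (hp i)) (by simpa [smul_eq_mul] using h1)
    (mem_univ j) (mem_univ k)

/-- If `z` lies on the boundary of the dual cone with `z̄ ≠ 0`, then `z̃ᵢ > 0` for all `i`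
and the exposed face `{z}^⊥ ∩ P` is the ray generated by `f = (-z̄/‖z̄‖², α ∘ z̃⁻¹)`. -/
theorem powCone_face_ray (m n : ℕ) (hm : 1 ≤ m) (hn : 2 ≤ n) (α : Fin n → ℝ)
    (hα : ∀ i, 0 < α i ∧ α i < 1) (hαsum : ∑ i, α i = 1)
    (z : E m n) (hz2 : ∀ i, 0 ≤ z.ofLp.2 i)
    (hzbd : ‖z.ofLp.1‖ = ∏ i, (z.ofLp.2 i / α i) ^ α i) (hz1 : z.ofLp.1 ≠ 0)
    (f : E m n) (hf1 : f.ofLp.1 = (-(‖z.ofLp.1‖ ^ 2)⁻¹) • z.ofLp.1) (hf2 : ∀ i, f.ofLp.2 i = α i / z.ofLp.2 i) :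
    (∀ i, 0 < z.ofLp.2 i) ∧
      {x | x ∈ PowCone m n α ∧ (∑ i, z.ofLp.1 i * x.ofLp.1 i) + (∑ i, z.ofLp.2 i * x.ofLp.2 i) = 0} =
        {x : E m n | ∃ t : ℝ, 0 ≤ t ∧ x = t • f} := by
  classical
  have hN : 0 < ‖z.ofLp.1‖ := norm_pos_iff.mpr hz1
  set N : ℝ := ‖z.ofLp.1‖ with hNdef
  -- positivity of z.ofLp.2
  have hz2pos : ∀ i, 0 < z.ofLp.2 i := by
    intro i
    rcases (hz2 i).lt_or_eq with h | h
    · exact h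
    · exfalso
      have h0 : (z.ofLp.2 i / α i) ^ α i = 0 := by
        rw [← h, zero_div, Real.zero_rpow (hα i).1.ne']
      have : N = 0 := by rw [hzbd]; exact Finset.prod_eq_zero (mem_univ i) h0
      exact hN.ne' this
  refine ⟨hz2pos, ?_⟩
  -- inner product as sum
  have hinner : ∀ u v : EuclideanSpace ℝ (Fin m), (inner ℝ u v : ℝ) = ∑ i, u i * v i := by
    intro u v; simp [PiLp.inner_apply, RCLike.inner_apply, conj_trivial]
    exact Finset.sum_congr rfl fun i _ => mul_comm _ _
  have hsumsq : ∑ i, z.ofLp.1 i * z.ofLp.1 i = N ^ 2 := by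
    rw [← hinner, real_inner_self_eq_norm_sq]
  -- product identity
  have hprodinv : ∏ i, (α i / z.ofLp.2 i) ^ α i = N⁻¹ := by
    rw [hzbd, ← Finset.prod_inv_distrib]
    refine Finset.prod_congr rfl fun i _ => ?_
    rw [← Real.inv_rpow (div_nonneg (hz2 i) (hα i).1.le), inv_div]
  have key : ∀ t : ℝ, 0 ≤ t → ∏ i, (t * (α i / z.ofLp.2 i)) ^ α i = t * N⁻¹ := by
    intro t ht
    calc ∏ i, (t * (α i / z.ofLp.2 i)) ^ α i
        = ∏ i, t ^ α i * (α i / z.ofLp.2 i) ^ α i :=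
          Finset.prod_congr rfl fun i _ =>
            Real.mul_rpow ht (div_nonneg (hα i).1.le (hz2pos i).le)
      _ = (∏ i, t ^ α i) * ∏ i, (α i / z.ofLp.2 i) ^ α i := Finset.prod_mul_distrib
      _ = t * N⁻¹ := by
          rw [← Real.rpow_sum_of_nonneg ht (fun i _ => (hα i).1.le), hαsum,
            Real.rpow_one, hprodinv]
  have hzf2 : ∀ i, z.ofLp.2 i * f.ofLp.2 i = α i := by
    intro i; rw [hf2 i, mul_comm, div_mul_cancel₀ _ (hz2pos i).ne']
  ext x
  simp only [Set.mem_setOf_eq]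
  constructor
  · rintro ⟨⟨hx2, hxcone⟩, horth⟩
    -- abbreviations
    set A := ∑ i, z.ofLp.1 i * x.ofLp.1 i with hA
    set B := ∑ i, z.ofLp.2 i * x.ofLp.2 i with hBdef
    set P := ∏ i, x.ofLp.2 i ^ α i with hPdef
    have hAineq : -(N * ‖x.ofLp.1‖) ≤ A := by
      have h1 : |A| ≤ N * ‖x.ofLp.1‖ := by
        rw [hA, ← hinner]; exact abs_real_inner_le_norm z.ofLp.1 x.ofLp.1
      linarith [neg_abs_le A]
    have hBineq : N * P ≤ B := by
      have hmain := Real.geom_mean_le_arith_mean_weighted univ α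
        (fun i => (z.ofLp.2 i / α i) * x.ofLp.2 i) (fun i _ => (hα i).1.le) hαsum
        (fun i _ => mul_nonneg (div_nonneg (hz2 i) (hα i).1.le) (hx2 i))
      have hl : ∏ i, ((z.ofLp.2 i / α i) * x.ofLp.2 i) ^ α i = N * P := by
        calc ∏ i, ((z.ofLp.2 i / α i) * x.ofLp.2 i) ^ α i
            = ∏ i, (z.ofLp.2 i / α i) ^ α i * x.ofLp.2 i ^ α i :=
              Finset.prod_congr rfl fun i _ =>
                Real.mul_rpow (div_nonneg (hz2 i) (hα i).1.le) (hx2 i)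
          _ = N * P := by rw [Finset.prod_mul_distrib, ← hzbd, hPdef]
      have hr : ∑ i, α i * ((z.ofLp.2 i / α i) * x.ofLp.2 i) = B := by
        refine Finset.sum_congr rfl fun i _ => ?_
        rw [show α i * (z.ofLp.2 i / α i * x.ofLp.2 i) = (α i / α i) * (z.ofLp.2 i * x.ofLp.2 i) by ring,
          div_self (hα i).1.ne', one_mul]
      rw [hl, hr] at hmain; exact hmain
    have hxconeN : N * ‖x.ofLp.1‖ ≤ N * P := mul_le_mul_of_nonneg_left hxcone hN.le
    have heqB : B = N * P := by linarith
    have heqP : N * P = N * ‖x.ofLp.1‖ := by linarith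
    have ePx : P = ‖x.ofLp.1‖ := mul_left_cancel₀ hN.ne' heqP
    by_cases hallpos : ∀ i, 0 < x.ofLp.2 i
    · -- all equal case
      set p : Fin n → ℝ := fun i => (z.ofLp.2 i / α i) * x.ofLp.2 i with hp
      have hppos : ∀ i, 0 < p i := fun i =>
        mul_pos (div_pos (hz2pos i) (hα i).1) (hallpos i)
      have hsum_eq : ∑ i, α i * p i = B := by
        refine Finset.sum_congr rfl fun i _ => ?_
        show α i * (z.ofLp.2 i / α i * x.ofLp.2 i) = z.ofLp.2 i * x.ofLp.2 i
        rw [show α i * (z.ofLp.2 i / α i * x.ofLp.2 i) = (α i / α i) * (z.ofLp.2 i * x.ofLp.2 i) by ring,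
          div_self (hα i).1.ne', one_mul]
      have hprod_eq : ∏ i, p i ^ α i = N * P := by
        calc ∏ i, p i ^ α i
            = ∏ i, (z.ofLp.2 i / α i) ^ α i * x.ofLp.2 i ^ α i :=
              Finset.prod_congr rfl fun i _ =>
                Real.mul_rpow (div_nonneg (hz2 i) (hα i).1.le) (hx2 i)
          _ = N * P := by rw [Finset.prod_mul_distrib, ← hzbd, hPdef]
      have hameq : ∑ i, α i * p i ≤ ∏ i, p i ^ α i := by
        rw [hsum_eq, hprod_eq, heqB]
      have hconst := amgm_eq_case α p (fun i => (hα i).1) hαsum hppos hameq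
      set i₀ : Fin n := ⟨0, by omega⟩ with hi₀
      set c : ℝ := p i₀ with hc
      have hcpos : 0 < c := hppos i₀
      have hx2eq : ∀ i, x.ofLp.2 i = c * (α i / z.ofLp.2 i) := by
        intro i
        have hpi : z.ofLp.2 i / α i * x.ofLp.2 i = c := hconst i i₀
        rw [← hpi]
        field_simp [(hα i).1.ne', (hz2pos i).ne']
        rw [mul_div_cancel_right₀ _ (hz2pos i).ne']
      have hPc : P = c * N⁻¹ := by
        rw [hPdef]
        rw [show (∏ i, x.ofLp.2 i ^ α i) = ∏ i, (c * (α i / z.ofLp.2 i)) ^ α i from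
          Finset.prod_congr rfl fun i _ => by rw [hx2eq i]]
        exact key c hcpos.le
      have hxnorm : ‖x.ofLp.1‖ = c * N⁻¹ := by rw [← ePx, hPc]
      -- Cauchy-Schwarz equality
      have hAeq : A = -(N * ‖x.ofLp.1‖) := by linarith
      have hcs : (inner ℝ z.ofLp.1 (-x.ofLp.1) : ℝ) = ‖z.ofLp.1‖ * ‖-x.ofLp.1‖ := by
        rw [inner_neg_right, hinner, ← hA, hAeq, norm_neg]; ring
      have hcs2 := inner_eq_norm_mul_iff_real.mp hcs
      -- ‖-x.ofLp.1‖ • z.ofLp.1 = ‖z.ofLp.1‖ • (-x.ofLp.1)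
      rw [norm_neg, hxnorm, ← hNdef] at hcs2
      have hx1eq : x.ofLp.1 = c • f.ofLp.1 := by
        have h3 : (c * N⁻¹) • z.ofLp.1 = N • (-x.ofLp.1) := hcs2
        have h5 : (N⁻¹ * (c * N⁻¹)) • z.ofLp.1 = -x.ofLp.1 := by
          rw [mul_smul, h3, smul_smul, inv_mul_cancel₀ hN.ne', one_smul]
        have h6 : x.ofLp.1 = (-(N⁻¹ * (c * N⁻¹))) • z.ofLp.1 := by
          rw [neg_smul, h5, neg_neg]
        rw [h6, hf1, smul_smul]
        congr 1
        rw [sq]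
        field_simp
      refine ⟨c, hcpos.le, ?_⟩
      refine (WithLp.ext_iff _).2 (Prod.ext hx1eq (PiLp.ext fun i => ?_))
      show x.ofLp.2 i = c * f.ofLp.2 i
      rw [hx2eq i, hf2 i]
    · -- some coordinate zero: x = 0
      push_neg at hallpos
      obtain ⟨i, hi⟩ := hallpos
      have hxi0 : x.ofLp.2 i = 0 := le_antisymm hi (hx2 i)
      have hP0 : P = 0 := by
        rw [hPdef]
        exact Finset.prod_eq_zero (mem_univ i)
          (by rw [hxi0, Real.zero_rpow (hα i).1.ne'])
      have hx1zero : x.ofLp.1 = 0 := by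
        have : ‖x.ofLp.1‖ ≤ 0 := by rw [← ePx, hP0]
        exact norm_le_zero_iff.mp this
      have hB0 : B = 0 := by rw [heqB, hP0, mul_zero]
      have hx2zero : ∀ j, x.ofLp.2 j = 0 := by
        intro j
        have h0 : ∑ k, z.ofLp.2 k * x.ofLp.2 k = 0 := by rw [← hBdef]; exact hB0
        have := (Finset.sum_eq_zero_iff_of_nonneg
          (fun k (_ : k ∈ univ) => mul_nonneg (hz2 k) (hx2 k))).mp h0 j (mem_univ j)
        rcases mul_eq_zero.mp this with h | h
        · exact absurd h (hz2pos j).ne'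
        · exact h
      refine ⟨0, le_refl 0, ?_⟩
      rw [zero_smul]
      exact (WithLp.ext_iff _).2 (Prod.ext hx1zero (PiLp.ext hx2zero))
  · rintro ⟨t, ht, rfl⟩
    have h2 : ∀ i, (t • f).ofLp.2 i = t * (α i / z.ofLp.2 i) := fun i => by
      show t * f.ofLp.2 i = _; rw [hf2 i]
    constructor
    · constructor
      · intro i
        rw [h2 i]
        exact mul_nonneg ht (div_nonneg (hα i).1.le (hz2pos i).le)
      · have hnorm : ‖(t • f).ofLp.1‖ = t * N⁻¹ := by
          show ‖t • f.ofLp.1‖ = t * N⁻¹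
          rw [norm_smul, hf1, norm_smul, ← hNdef]
          simp only [Real.norm_eq_abs, abs_neg, abs_inv, abs_of_nonneg ht,
            abs_of_nonneg (sq_nonneg N)]
          rw [sq]
          field_simp
        rw [hnorm]
        rw [show (∏ i, (t • f).ofLp.2 i ^ α i) = ∏ i, (t * (α i / z.ofLp.2 i)) ^ α i from
          Finset.prod_congr rfl fun i _ => by rw [h2 i]]
        rw [key t ht]
    · have hleft : ∑ i, z.ofLp.1 i * (t • f).ofLp.1 i = -t := by
        have hf1i : ∀ i, (t • f).ofLp.1 i = t * (-(N ^ 2)⁻¹ * z.ofLp.1 i) := by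
          intro i
          show t * f.ofLp.1 i = _
          rw [hf1]
          rfl
        calc ∑ i, z.ofLp.1 i * (t • f).ofLp.1 i
            = ∑ i, (t * -(N ^ 2)⁻¹) * (z.ofLp.1 i * z.ofLp.1 i) := by
              refine Finset.sum_congr rfl fun i _ => ?_; rw [hf1i i]; ring
          _ = (t * -(N ^ 2)⁻¹) * ∑ i, z.ofLp.1 i * z.ofLp.1 i := by rw [Finset.mul_sum]
          _ = -t := by rw [hsumsq]; field_simp
      have hright : ∑ i, z.ofLp.2 i * (t • f).ofLp.2 i = t := by
        calc ∑ i, z.ofLp.2 i * (t • f).ofLp.2 i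
            = ∑ i, t * α i := by
              refine Finset.sum_congr rfl fun i _ => ?_
              show z.ofLp.2 i * (t * f.ofLp.2 i) = t * α i
              rw [← hzf2 i]; ring
          _ = t := by rw [← Finset.mul_sum, hαsum, mul_one]
      rw [hleft, hright]; ring
end
end

section
/- Let z = (0, z̃) be a nonzero point of the boundary of (P^α_{m,n})^* with z̄ = 0, and let I = { i : z̃ᵢ > 0 }, which is nonempty. Then {z}^⊥ ∩ P^α_{m,n} = { (x̄, x̃) ∈ ℝ^m × ℝⁿ₊ : x̄ = 0 and x̃ᵢ = 0 for all i ∈ I }, and this face has dimension n - |I|. -/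
open Finset

noncomputable section

/-- If `z = (0, z̃)` is a nonzero boundary point of the dual cone with `I = {i : z̃ᵢ > 0}`,
then `{z}^⊥ ∩ P = {(0, x̃) : x̃ ≥ 0, x̃ᵢ = 0 ∀ i ∈ I}`, a face of dimension `n - |I|`. -/
theorem powCone_face_dim (m n : ℕ) (hm : 1 ≤ m) (hn : 2 ≤ n) (α : Fin n → ℝ)
    (hα : ∀ i, 0 < α i ∧ α i < 1) (hαsum : ∑ i, α i = 1)
    (z : E m n) (hz1 : z.ofLp.1 = 0) (hz2 : ∀ i, 0 ≤ z.ofLp.2 i) (hzne : z ≠ 0)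
    (hzbd : ‖z.ofLp.1‖ = ∏ i, (z.ofLp.2 i / α i) ^ α i)
    (I : Finset (Fin n)) (hI : ∀ i, i ∈ I ↔ 0 < z.ofLp.2 i) :
    I.Nonempty ∧
    {x | x ∈ PowCone m n α ∧ (∑ i, z.ofLp.1 i * x.ofLp.1 i) + (∑ i, z.ofLp.2 i * x.ofLp.2 i) = 0} =
      {x : E m n | x.ofLp.1 = 0 ∧ (∀ i, 0 ≤ x.ofLp.2 i) ∧ ∀ i ∈ I, x.ofLp.2 i = 0} ∧
    Module.finrank ℝ (Submodule.span ℝ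
        {x : E m n | x.ofLp.1 = 0 ∧ (∀ i, 0 ≤ x.ofLp.2 i) ∧ ∀ i ∈ I, x.ofLp.2 i = 0}) = n - I.card := by
  have hz1' : ∀ i, z.ofLp.1 i = 0 := fun i => by rw [hz1]; rfl
  have hIne : I.Nonempty := by
    rw [Finset.nonempty_iff_ne_empty]
    intro h
    apply hzne
    have hz2' : ∀ i, z.ofLp.2 i = 0 := by
      intro i
      have hni : i ∉ I := by simp [h]
      have : ¬ 0 < z.ofLp.2 i := fun hpos => hni ((hI i).2 hpos)
      exact le_antisymm (not_lt.1 this) (hz2 i)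
    exact (WithLp.ext_iff _).2 (Prod.ext hz1 ((WithLp.ext_iff _).2 (funext hz2')))
  refine ⟨hIne, ?_, ?_⟩
  · ext x
    simp only [Set.mem_setOf_eq, PowCone]
    constructor
    · rintro ⟨⟨hxpos, hxnorm⟩, hsum⟩
      have hsum2 : ∑ i, z.ofLp.2 i * x.ofLp.2 i = 0 := by
        simpa only [hz1', zero_mul, Finset.sum_const_zero, zero_add] using hsum
      have hterm : ∀ i ∈ Finset.univ, z.ofLp.2 i * x.ofLp.2 i = 0 :=
        (Finset.sum_eq_zero_iff_of_nonneg
          (fun i _ => mul_nonneg (hz2 i) (hxpos i))).1 hsum2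
      have hxI : ∀ i ∈ I, x.ofLp.2 i = 0 := by
        intro i hi
        rcases mul_eq_zero.1 (hterm i (mem_univ i)) with h | h
        · exact absurd ((hI i).1 hi) (by rw [h]; exact lt_irrefl 0)
        · exact h
      obtain ⟨i0, hi0⟩ := hIne
      have hprod : (∏ i, x.ofLp.2 i ^ α i) = 0 :=
        Finset.prod_eq_zero (mem_univ i0)
          (by rw [hxI i0 hi0]; exact Real.zero_rpow (ne_of_gt (hα i0).1))
      exact ⟨norm_le_zero_iff.1 (hxnorm.trans_eq hprod), hxpos, hxI⟩
    · rintro ⟨hx1, hxpos, hxI⟩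
      refine ⟨⟨hxpos, ?_⟩, ?_⟩
      · rw [hx1]
        simpa using Finset.prod_nonneg (fun i _ => Real.rpow_nonneg (hxpos i) _)
      · have hterm : ∀ i, z.ofLp.2 i * x.ofLp.2 i = 0 := by
          intro i
          by_cases hi : i ∈ I
          · rw [hxI i hi, mul_zero]
          · have : z.ofLp.2 i = 0 := le_antisymm (not_lt.1 (mt (hI i).2 hi)) (hz2 i)
            rw [this, zero_mul]
        simp only [hz1', hterm, zero_mul, Finset.sum_const_zero, add_zero]
  · set S : Set (E m n) :=
      {x : E m n | x.ofLp.1 = 0 ∧ (∀ i, 0 ≤ x.ofLp.2 i) ∧ ∀ i ∈ I, x.ofLp.2 i = 0} with hS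
    let W : Submodule ℝ (E m n) :=
      { carrier := {x : E m n | x.ofLp.1 = 0 ∧ ∀ i ∈ I, x.ofLp.2 i = 0}
        add_mem' := fun {a b} ha hb => ⟨by
            show a.ofLp.1 + b.ofLp.1 = 0
            rw [ha.1, hb.1, add_zero],
          fun i hi => by
            show a.ofLp.2 i + b.ofLp.2 i = 0
            rw [ha.2 i hi, hb.2 i hi, add_zero]⟩
        zero_mem' := ⟨rfl, fun i _ => rfl⟩
        smul_mem' := fun c a ha => ⟨by
            show c • a.ofLp.1 = 0
            rw [ha.1, smul_zero],
          fun i hi => by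
            show c * a.ofLp.2 i = 0
            rw [ha.2 i hi, mul_zero]⟩ }
    have hspan : Submodule.span ℝ S = W := by
      apply le_antisymm
      · rw [Submodule.span_le]
        rintro x ⟨h1, _, h3⟩
        exact ⟨h1, h3⟩
      · rintro x ⟨h1, h3⟩
        have hplus : (WithLp.toLp 2 (0, WithLp.toLp 2 (fun i => max (x.ofLp.2 i) 0)) : E m n) ∈ S :=
          ⟨rfl, fun i => le_max_right _ _, fun i hi => by
            show max (x.ofLp.2 i) 0 = 0
            rw [h3 i hi, max_self]⟩
        have hminus : (WithLp.toLp 2 (0, WithLp.toLp 2 (fun i => max (-(x.ofLp.2 i)) 0)) : E m n) ∈ S :=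
          ⟨rfl, fun i => le_max_right _ _, fun i hi => by
            show max (-(x.ofLp.2 i)) 0 = 0
            rw [h3 i hi, neg_zero, max_self]⟩
        have hx : x = (WithLp.toLp 2 (0, WithLp.toLp 2 (fun i => max (x.ofLp.2 i) 0)) : E m n) -
            (WithLp.toLp 2 (0, WithLp.toLp 2 (fun i => max (-(x.ofLp.2 i)) 0)) : E m n) := by
          refine (WithLp.ext_iff _).2 (Prod.ext ?_ ((WithLp.ext_iff _).2 (funext fun i => ?_)))
          · show x.ofLp.1 = 0 - 0
            rw [h1, sub_zero]
          · show x.ofLp.2 i = max (x.ofLp.2 i) 0 - max (-(x.ofLp.2 i)) 0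
            rcases le_total (x.ofLp.2 i) 0 with h | h
            · rw [max_eq_right h, max_eq_left (by linarith), zero_sub, neg_neg]
            · rw [max_eq_left h, max_eq_right (by linarith), sub_zero]
        rw [hx]
        exact sub_mem (Submodule.subset_span hplus) (Submodule.subset_span hminus)
    rw [hspan]
    let φ : E m n →ₗ[ℝ] ((Iᶜ : Finset (Fin n)) → ℝ) :=
      { toFun := fun x j => x.ofLp.2 j
        map_add' := fun a b => rfl
        map_smul' := fun c a => rfl }
    have hbij : Function.Bijective (φ.comp W.subtype) := by
      constructor
      · rintro ⟨a, ha1, ha2⟩ ⟨b, hb1, hb2⟩ hab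
        have hab' : ∀ j : (Iᶜ : Finset (Fin n)), a.ofLp.2 j = b.ofLp.2 j :=
          fun j => congrFun hab j
        apply Subtype.ext
        refine (WithLp.ext_iff _).2 (Prod.ext (ha1.trans hb1.symm) ((WithLp.ext_iff _).2 (funext fun i => ?_)))
        by_cases hi : i ∈ I
        · rw [ha2 i hi, hb2 i hi]
        · exact hab' ⟨i, Finset.mem_compl.2 hi⟩
      · intro f
        refine ⟨⟨(WithLp.toLp 2
            (0, WithLp.toLp 2 (fun i => if h : i ∈ I then 0 else f ⟨i, Finset.mem_compl.2 h⟩)) : E m n),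
            rfl, fun i hi => by simp [hi]⟩, ?_⟩
        funext j
        show (if h : (j : Fin n) ∈ I then 0 else f ⟨j, Finset.mem_compl.2 h⟩) = f j
        have hj : (j : Fin n) ∉ I := Finset.mem_compl.1 j.2
        simp [hj]
    have hequiv := LinearEquiv.ofBijective (φ.comp W.subtype) hbij
    rw [hequiv.finrank_eq]
    simp [Module.finrank_pi, Fintype.card_coe, Finset.card_compl]
end
end

section
/- Every face of the generalized power cone P^α_{m,n} is exposed; more strongly, for every face F of P^α_{m,n} there exists a linear map P on ℝ^{m+n} with P² = P and P(P^α_{m,n}) = F (i.e., P^α_{m,n} is projectionally exposed). -/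
open Finset

noncomputable section

section Aux

variable {m n : ℕ} {α : Fin n → ℝ}

/-- Equality case of weighted AM-GM. -/
lemma amgm_eq (hα : ∀ i, 0 < α i) (hαsum : ∑ i, α i = 1) (t : Fin n → ℝ)
    (ht : ∀ i, 0 ≤ t i) (heq : ∑ i, α i * t i ≤ ∏ i, t i ^ α i) :
    ∀ i, t i = ∑ j, α j * t j := by
  by_cases hz : ∃ i, t i = 0
  · obtain ⟨i0, hi0⟩ := hz
    have hprod : ∏ i, t i ^ α i = 0 := by
      apply Finset.prod_eq_zero (Finset.mem_univ i0)
      rw [hi0, Real.zero_rpow (hα i0).ne']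
    have hnn : ∀ i ∈ Finset.univ, 0 ≤ α i * t i :=
      fun i _ => mul_nonneg (hα i).le (ht i)
    have hsum0 : ∑ i, α i * t i = 0 :=
      le_antisymm (hprod ▸ heq) (Finset.sum_nonneg hnn)
    intro i
    have h := (Finset.sum_eq_zero_iff_of_nonneg hnn).1 hsum0 i (Finset.mem_univ i)
    have : t i = 0 := by
      rcases mul_eq_zero.1 h with h' | h'
      · exact absurd h' (hα i).ne'
      · exact h'
    rw [this, hsum0]
  · push_neg at hz
    have htpos : ∀ i, 0 < t i := fun i => (ht i).lt_of_ne (Ne.symm (hz i))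
    have hspos : 0 < ∑ i, α i * t i := by
      have hne : (Finset.univ : Finset (Fin n)).Nonempty := by
        by_contra h
        rw [Finset.not_nonempty_iff_eq_empty] at h
        rw [h, Finset.sum_empty] at hαsum
        norm_num at hαsum
      exact Finset.sum_pos (fun i _ => mul_pos (hα i) (htpos i)) hne
    have hle : Real.log (∑ i, α i * t i) ≤ ∑ i, α i • Real.log (t i) := by
      calc Real.log (∑ i, α i * t i) ≤ Real.log (∏ i, t i ^ α i) :=
            Real.log_le_log hspos heq
        _ = ∑ i, Real.log (t i ^ α i) :=
            Real.log_prod (fun i _ => (Real.rpow_pos_of_pos (htpos i) _).ne')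
        _ = ∑ i, α i • Real.log (t i) := by
            refine Finset.sum_congr rfl fun i _ => ?_
            rw [Real.log_rpow (htpos i), smul_eq_mul]
    have hkey := strictConcaveOn_log_Ioi.eq_of_map_sum_eq (t := Finset.univ)
      (w := α) (p := t) (fun i _ => hα i) hαsum (fun i _ => htpos i)
      (by simpa [smul_eq_mul] using hle)
    intro i
    calc t i = (∑ j, α j) * t i := by rw [hαsum, one_mul]
      _ = ∑ j, α j * t j := by
          rw [Finset.sum_mul]
          exact Finset.sum_congr rfl fun j _ =>
            by rw [hkey (Finset.mem_univ i) (Finset.mem_univ j)]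

lemma prod_rpow_nonneg (hα : ∀ i, 0 < α i) (t : Fin n → ℝ) (ht : ∀ i, 0 ≤ t i) :
    0 ≤ ∏ i, t i ^ α i :=
  Finset.prod_nonneg fun i _ => Real.rpow_nonneg (ht i) _

lemma prod_smul_rpow (hα : ∀ i, 0 < α i) (hαsum : ∑ i, α i = 1) {c : ℝ} (hc : 0 ≤ c)
    (t : Fin n → ℝ) (ht : ∀ i, 0 ≤ t i) :
    ∏ i, (c * t i) ^ α i = c * ∏ i, t i ^ α i := by
  calc ∏ i, (c * t i) ^ α i = ∏ i, c ^ α i * t i ^ α i :=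
        Finset.prod_congr rfl fun i _ => Real.mul_rpow hc (ht i)
    _ = (∏ i, c ^ α i) * ∏ i, t i ^ α i := Finset.prod_mul_distrib
    _ = c * ∏ i, t i ^ α i := by
        rw [← Real.rpow_sum_of_nonneg hc (fun i _ => (hα i).le), hαsum, Real.rpow_one]

lemma cone_smul (hα : ∀ i, 0 < α i) (hαsum : ∑ i, α i = 1) {x : E m n}
    (hx : x ∈ PowCone m n α) {c : ℝ} (hc : 0 ≤ c) : c • x ∈ PowCone m n α := by
  obtain ⟨h1, h2⟩ := hx
  refine ⟨fun i => ?_, ?_⟩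
  · show 0 ≤ c * x.ofLp.2 i
    exact mul_nonneg hc (h1 i)
  · show ‖c • x.ofLp.1‖ ≤ ∏ i, (c * x.ofLp.2 i) ^ α i
    rw [norm_smul, Real.norm_eq_abs, abs_of_nonneg hc, prod_smul_rpow hα hαsum hc _ h1]
    exact mul_le_mul_of_nonneg_left h2 hc

end Aux
section Aux2

variable {m n : ℕ} {α : Fin n → ℝ}

/-- The key dual-vector inequality/equality analysis at a boundary point `x0`. -/
lemma key (hα : ∀ i, 0 < α i) (hαsum : ∑ i, α i = 1) (x0 x : E m n)
    (h0 : ∀ i, 0 < x0.ofLp.2 i) (hN : x0.ofLp.1 ≠ 0) (hbd : ‖x0.ofLp.1‖ = ∏ i, x0.ofLp.2 i ^ α i)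
    (hx : x ∈ PowCone m n α) :
    0 ≤ (∏ i, x0.ofLp.2 i ^ α i) * (∑ i, α i * (x.ofLp.2 i / x0.ofLp.2 i))
        - ‖x0.ofLp.1‖⁻¹ * (inner ℝ x0.ofLp.1 x.ofLp.1 : ℝ) ∧
    ((∏ i, x0.ofLp.2 i ^ α i) * (∑ i, α i * (x.ofLp.2 i / x0.ofLp.2 i))
        - ‖x0.ofLp.1‖⁻¹ * (inner ℝ x0.ofLp.1 x.ofLp.1 : ℝ) = 0 →
      ∃ c : ℝ, 0 ≤ c ∧ x = c • x0) := by
  obtain ⟨hx2, hx1⟩ := hx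
  have hNpos : 0 < ‖x0.ofLp.1‖ := norm_pos_iff.2 hN
  set G0 := ∏ i, x0.ofLp.2 i ^ α i with hG0
  set G := ∏ i, x.ofLp.2 i ^ α i with hG
  set S := ∑ i, α i * (x.ofLp.2 i / x0.ofLp.2 i) with hS
  have hG0pos : 0 < G0 := hbd ▸ hNpos
  have hprod_div : ∏ i, (x.ofLp.2 i / x0.ofLp.2 i) ^ α i = G / G0 := by
    rw [hG, hG0, ← Finset.prod_div_distrib]
    exact Finset.prod_congr rfl fun i _ => Real.div_rpow (hx2 i) (h0 i).le _
  have hamgm : ∏ i, (x.ofLp.2 i / x0.ofLp.2 i) ^ α i ≤ S :=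
    Real.geom_mean_le_arith_mean_weighted Finset.univ α _ (fun i _ => (hα i).le) hαsum
      (fun i _ => div_nonneg (hx2 i) (h0 i).le)
  have hGS : G ≤ G0 * S := by
    have h := hprod_div ▸ hamgm
    calc G = G / G0 * G0 := by field_simp
      _ ≤ S * G0 := mul_le_mul_of_nonneg_right h hG0pos.le
      _ = G0 * S := mul_comm _ _
  have hCS : (inner ℝ x0.ofLp.1 x.ofLp.1 : ℝ) ≤ ‖x0.ofLp.1‖ * ‖x.ofLp.1‖ := real_inner_le_norm _ _
  have h1 : ‖x0.ofLp.1‖⁻¹ * (inner ℝ x0.ofLp.1 x.ofLp.1 : ℝ) ≤ ‖x.ofLp.1‖ := by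
    have := mul_le_mul_of_nonneg_left hCS (inv_nonneg.2 hNpos.le)
    rwa [inv_mul_cancel_left₀ hNpos.ne'] at this
  constructor
  · linarith
  · intro hQ0
    have e1 : ‖x.ofLp.1‖ = G := le_antisymm hx1 (by linarith)
    have e2 : G = G0 * S := le_antisymm hGS (by linarith)
    have h4 : ‖x0.ofLp.1‖⁻¹ * (inner ℝ x0.ofLp.1 x.ofLp.1 : ℝ) = ‖x.ofLp.1‖ := by linarith
    have e3 : (inner ℝ x0.ofLp.1 x.ofLp.1 : ℝ) = ‖x0.ofLp.1‖ * ‖x.ofLp.1‖ := by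
      calc (inner ℝ x0.ofLp.1 x.ofLp.1 : ℝ) = ‖x0.ofLp.1‖ * (‖x0.ofLp.1‖⁻¹ * (inner ℝ x0.ofLp.1 x.ofLp.1 : ℝ)) := by
            rw [mul_inv_cancel_left₀ hNpos.ne']
        _ = ‖x0.ofLp.1‖ * ‖x.ofLp.1‖ := by rw [h4]
    have hSnn : 0 ≤ S :=
      Finset.sum_nonneg fun i _ => mul_nonneg (hα i).le (div_nonneg (hx2 i) (h0 i).le)
    have heq2 : ∑ i, α i * (x.ofLp.2 i / x0.ofLp.2 i) ≤ ∏ i, (x.ofLp.2 i / x0.ofLp.2 i) ^ α i := by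
      rw [hprod_div, e2, mul_comm G0 S, mul_div_assoc, div_self hG0pos.ne', mul_one]
    have hteq := amgm_eq hα hαsum (fun i => x.ofLp.2 i / x0.ofLp.2 i)
      (fun i => div_nonneg (hx2 i) (h0 i).le) heq2
    have hx2eq : ∀ i, x.ofLp.2 i = S * x0.ofLp.2 i := by
      intro i
      have h := hteq i
      rw [div_eq_iff (h0 i).ne'] at h
      rw [h, hS, mul_comm]
    have hnorm : ‖x.ofLp.1‖ = S * ‖x0.ofLp.1‖ := by rw [e1, e2, hbd]; ring
    have hx1eq : x.ofLp.1 = S • x0.ofLp.1 := by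
      have h := (inner_eq_norm_mul_iff_real).1 e3
      have h2 := congrArg (fun v : EuclideanSpace ℝ (Fin m) => (‖x0.ofLp.1‖⁻¹ : ℝ) • v) h
      simp only [smul_smul] at h2
      rw [inv_mul_cancel₀ hNpos.ne', one_smul] at h2
      rw [← h2, hnorm]
      have hsc : ‖x0.ofLp.1‖⁻¹ * (S * ‖x0.ofLp.1‖) = S := by field_simp
      rw [hsc]
    refine ⟨S, hSnn, WithLp.ofLp_injective 2 (Prod.ext hx1eq (PiLp.ext fun i => hx2eq i))⟩

/-- From an interior point `w` of the cone one can subtract a small multiple of any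
cone element and stay in the cone. -/
lemma exists_sub_mem (hα : ∀ i, 0 < α i) (w y : E m n)
    (hw2 : ∀ i, 0 < w.ofLp.2 i) (hstrict : ‖w.ofLp.1‖ < ∏ i, w.ofLp.2 i ^ α i) :
    ∃ ε : ℝ, 0 < ε ∧ w - ε • y ∈ PowCone m n α := by
  have hcont1 : Continuous (fun ε : ℝ => ∏ i, (w.ofLp.2 i - ε * y.ofLp.2 i) ^ α i) := by
    apply continuous_finset_prod
    intro i _
    exact (Real.continuous_rpow_const (hα i).le).comp (by fun_prop)
  have hcont2 : Continuous (fun ε : ℝ => ‖w.ofLp.1 - ε • y.ofLp.1‖) := by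
    apply Continuous.norm
    exact continuous_const.sub (continuous_id.smul continuous_const)
  have hev2 : ∀ᶠ ε : ℝ in nhds 0,
      ‖w.ofLp.1 - ε • y.ofLp.1‖ < ∏ i, (w.ofLp.2 i - ε * y.ofLp.2 i) ^ α i := by
    have := (hcont2.continuousAt (x := 0)).eventually_lt (hcont1.continuousAt) (by simpa using hstrict)
    exact this
  have hev1 : ∀ᶠ ε : ℝ in nhds 0, ∀ i, 0 < w.ofLp.2 i - ε * y.ofLp.2 i := by
    rw [Filter.eventually_all]
    intro i
    have hc : Continuous (fun ε : ℝ => w.ofLp.2 i - ε * y.ofLp.2 i) := by fun_prop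
    have h : ∀ᶠ ε : ℝ in nhds 0, (fun _ : ℝ => (0:ℝ)) ε < w.ofLp.2 i - ε * y.ofLp.2 i :=
      ContinuousAt.eventually_lt continuousAt_const hc.continuousAt
        (by simpa using hw2 i)
    exact h
  have hcomb := (hev1.and hev2).filter_mono (nhdsWithin_le_nhds (s := Set.Ioi (0:ℝ)))
  obtain ⟨ε, hε, hεpos⟩ := (hcomb.and eventually_mem_nhdsWithin).exists
  refine ⟨ε, hεpos, ?_, ?_⟩
  · intro i
    show 0 ≤ w.ofLp.2 i - ε * y.ofLp.2 i
    exact (hε.1 i).le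
  · show ‖w.ofLp.1 - ε • y.ofLp.1‖ ≤ ∏ i, (w.ofLp.2 i - ε * y.ofLp.2 i) ^ α i
    exact hε.2.le

end Aux2
section Aux3

variable {m n : ℕ}

/-- The dual pairing used in the theorem statement. -/
def pr (z x : E m n) : ℝ := (∑ i, z.ofLp.1 i * x.ofLp.1 i) + (∑ i, z.ofLp.2 i * x.ofLp.2 i)

lemma pr_add (z a b : E m n) : pr z (a + b) = pr z a + pr z b := by
  unfold pr
  have h1 : ∀ i, z.ofLp.1 i * (a + b).ofLp.1 i = z.ofLp.1 i * a.ofLp.1 i + z.ofLp.1 i * b.ofLp.1 i := fun i => by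
    show z.ofLp.1 i * (a.ofLp.1 i + b.ofLp.1 i) = _; ring
  have h2 : ∀ i, z.ofLp.2 i * (a + b).ofLp.2 i = z.ofLp.2 i * a.ofLp.2 i + z.ofLp.2 i * b.ofLp.2 i := fun i => by
    show z.ofLp.2 i * (a.ofLp.2 i + b.ofLp.2 i) = _; ring
  rw [Finset.sum_congr rfl fun i _ => h1 i, Finset.sum_congr rfl fun i _ => h2 i,
    Finset.sum_add_distrib, Finset.sum_add_distrib]
  ring

lemma pr_smul (z : E m n) (c : ℝ) (a : E m n) : pr z (c • a) = c * pr z a := by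
  unfold pr
  have h1 : ∀ i, z.ofLp.1 i * (c • a).ofLp.1 i = c * (z.ofLp.1 i * a.ofLp.1 i) := fun i => by
    show z.ofLp.1 i * (c * a.ofLp.1 i) = _; ring
  have h2 : ∀ i, z.ofLp.2 i * (c • a).ofLp.2 i = c * (z.ofLp.2 i * a.ofLp.2 i) := fun i => by
    show z.ofLp.2 i * (c * a.ofLp.2 i) = _; ring
  rw [Finset.sum_congr rfl fun i _ => h1 i, Finset.sum_congr rfl fun i _ => h2 i,
    ← Finset.mul_sum, ← Finset.mul_sum]
  ring

/-- The exposing dual vector attached to a boundary point `b`. -/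
def zOf (α : Fin n → ℝ) (b : E m n) : E m n :=
  WithLp.toLp 2 (-(‖b.ofLp.1‖⁻¹ • b.ofLp.1), WithLp.toLp 2 (fun i => α i * (∏ j, b.ofLp.2 j ^ α j) / b.ofLp.2 i))

lemma inner_eq_sum (u v : EuclideanSpace ℝ (Fin m)) : (inner ℝ u v : ℝ) = ∑ i, u i * v i := by
  simp [PiLp.inner_apply, RCLike.inner_apply, mul_comm]

lemma pr_zOf (α : Fin n → ℝ) (b x : E m n) :
    pr (zOf α b) x = (∏ i, b.ofLp.2 i ^ α i) * (∑ i, α i * (x.ofLp.2 i / b.ofLp.2 i))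
      - ‖b.ofLp.1‖⁻¹ * (inner ℝ b.ofLp.1 x.ofLp.1 : ℝ) := by
  unfold pr zOf
  have h1 : ∀ i : Fin m, (-(‖b.ofLp.1‖⁻¹ • b.ofLp.1)) i * x.ofLp.1 i = -(‖b.ofLp.1‖⁻¹ * (b.ofLp.1 i * x.ofLp.1 i)) :=
    fun i => by show -(‖b.ofLp.1‖⁻¹ * b.ofLp.1 i) * x.ofLp.1 i = _; ring
  have h2 : ∀ i : Fin n, (α i * (∏ j, b.ofLp.2 j ^ α j) / b.ofLp.2 i) * x.ofLp.2 i
      = (∏ j, b.ofLp.2 j ^ α j) * (α i * (x.ofLp.2 i / b.ofLp.2 i)) := fun i => by ring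
  rw [Finset.sum_congr rfl fun i _ => h1 i, Finset.sum_congr rfl fun i _ => h2 i,
    Finset.sum_neg_distrib, ← Finset.mul_sum, ← Finset.mul_sum, inner_eq_sum]
  ring

lemma pr_zOf_self {α : Fin n → ℝ} (hαsum : ∑ i, α i = 1) (b : E m n)
    (hb2 : ∀ i, 0 < b.ofLp.2 i) (hbd : ‖b.ofLp.1‖ = ∏ i, b.ofLp.2 i ^ α i) :
    pr (zOf α b) b = 0 := by
  rw [pr_zOf]
  have h1 : ∑ i, α i * (b.ofLp.2 i / b.ofLp.2 i) = 1 := by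
    rw [← hαsum]
    exact Finset.sum_congr rfl fun i _ => by rw [div_self (hb2 i).ne', mul_one]
  rw [h1, real_inner_self_eq_norm_mul_norm, ← hbd, mul_one]
  by_cases h : ‖b.ofLp.1‖ = 0
  · rw [h]; ring
  · field_simp; ring

/-- Restatement of `key` via `pr` and `zOf`. -/
lemma key' {α : Fin n → ℝ} (hα : ∀ i, 0 < α i) (hαsum : ∑ i, α i = 1) (b x : E m n)
    (h0 : ∀ i, 0 < b.ofLp.2 i) (hN : b.ofLp.1 ≠ 0) (hbd : ‖b.ofLp.1‖ = ∏ i, b.ofLp.2 i ^ α i)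
    (hx : x ∈ PowCone m n α) :
    0 ≤ pr (zOf α b) x ∧ (pr (zOf α b) x = 0 → ∃ c : ℝ, 0 ≤ c ∧ x = c • b) := by
  rw [pr_zOf]
  exact key hα hαsum b x h0 hN hbd hx

end Aux3
section Aux4

/-- Coordinate projection onto the block of coordinates in `J` (killing the first block). -/
def coordProj (m n : ℕ) (J : Finset (Fin n)) : E m n →ₗ[ℝ] E m n :=
  { toFun := fun x => WithLp.toLp 2 ((0 : EuclideanSpace ℝ (Fin m)),
      WithLp.toLp 2 (fun i => if i ∈ J then x.ofLp.2 i else 0)),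
    map_add' := by
      intro a b
      refine WithLp.ofLp_injective 2 (Prod.ext ?_ (PiLp.ext fun i => ?_))
      · show (0 : EuclideanSpace ℝ (Fin m)) = 0 + 0
        rw [add_zero]
      · show (if i ∈ J then (a + b).ofLp.2 i else 0)
          = (if i ∈ J then a.ofLp.2 i else 0) + (if i ∈ J then b.ofLp.2 i else 0)
        have h : (a + b).ofLp.2 i = a.ofLp.2 i + b.ofLp.2 i := rfl
        rw [h]
        split_ifs <;> simp
    map_smul' := by
      intro c a
      refine WithLp.ofLp_injective 2 (Prod.ext ?_ (PiLp.ext fun i => ?_))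
      · show (0 : EuclideanSpace ℝ (Fin m)) = c • (0 : EuclideanSpace ℝ (Fin m))
        rw [smul_zero]
      · show (if i ∈ J then (c • a).ofLp.2 i else 0) = c * (if i ∈ J then a.ofLp.2 i else 0)
        have h : (c • a).ofLp.2 i = c * a.ofLp.2 i := rfl
        rw [h]
        split_ifs <;> simp }

lemma coordProj_fst (m n : ℕ) (J : Finset (Fin n)) (x : E m n) :
    (coordProj m n J x).ofLp.1 = 0 := rfl

lemma coordProj_snd (m n : ℕ) (J : Finset (Fin n)) (x : E m n) (i : Fin n) :
    (coordProj m n J x).ofLp.2 i = if i ∈ J then x.ofLp.2 i else 0 := rfl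

/-- Projection onto a ray spanned by `x0`, using the sum of second-block coordinates. -/
def rayProj (m n : ℕ) (x0 : E m n) (T : ℝ) : E m n →ₗ[ℝ] E m n :=
  { toFun := fun x => ((∑ i, x.ofLp.2 i) / T) • x0,
    map_add' := by
      intro a b
      show ((∑ i, (a.ofLp.2 i + b.ofLp.2 i)) / T) • x0
        = ((∑ i, a.ofLp.2 i) / T) • x0 + ((∑ i, b.ofLp.2 i) / T) • x0
      rw [Finset.sum_add_distrib, add_div, add_smul]
    map_smul' := by
      intro c a
      show ((∑ i, c * a.ofLp.2 i) / T) • x0 = c • (((∑ i, a.ofLp.2 i) / T) • x0)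
      rw [← Finset.mul_sum, mul_div_assoc, mul_smul] }

lemma rayProj_apply (m n : ℕ) (x0 : E m n) (T : ℝ) (x : E m n) :
    rayProj m n x0 T x = ((∑ i, x.ofLp.2 i) / T) • x0 := rfl

end Aux4
/-- The generalized power cone is projectionally exposed: every (nonempty) face `F` is the
image of the cone under an idempotent linear map, and in particular every face is exposed. -/
theorem powCone_projectionally_exposed (m n : ℕ) (hm : 1 ≤ m) (hn : 2 ≤ n) (α : Fin n → ℝ)
    (hα : ∀ i, 0 < α i ∧ α i < 1) (hαsum : ∑ i, α i = 1) :
    ∀ F : Set (E m n), F.Nonempty → IsClosed F → Convex ℝ F →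
      (∀ x ∈ F, ∀ c : ℝ, 0 ≤ c → c • x ∈ F) → F ⊆ PowCone m n α →
      (∀ x ∈ PowCone m n α, ∀ y ∈ PowCone m n α, x + y ∈ F → x ∈ F ∧ y ∈ F) →
      (∃ P : E m n →ₗ[ℝ] E m n, P ∘ₗ P = P ∧ ⇑P '' PowCone m n α = F) ∧
      (∃ z : E m n,
        (∀ x ∈ PowCone m n α, 0 ≤ (∑ i, z.ofLp.1 i * x.ofLp.1 i) + (∑ i, z.ofLp.2 i * x.ofLp.2 i)) ∧
        F = {x | x ∈ PowCone m n α ∧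
              (∑ i, z.ofLp.1 i * x.ofLp.1 i) + (∑ i, z.ofLp.2 i * x.ofLp.2 i) = 0}) := by
  classical
  intro F hFne hFcl hFconv hscale hsub hface
  have hα1 : ∀ i, 0 < α i := fun i => (hα i).1
  have h0F : (0 : E m n) ∈ F := by
    obtain ⟨f, hf⟩ := hFne
    have := hscale f hf 0 le_rfl
    simpa using this
  have haddF : ∀ a ∈ F, ∀ b ∈ F, a + b ∈ F := by
    intro a ha b hb
    have hmem := hFconv ha hb (by norm_num : (0:ℝ) ≤ 1/2) (by norm_num : (0:ℝ) ≤ 1/2)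
      (by norm_num)
    have h2 := hscale _ hmem 2 (by norm_num)
    have heq : (2:ℝ) • ((1/2:ℝ) • a + (1/2:ℝ) • b) = a + b := by module
    rwa [heq] at h2
  by_cases hEx : ∃ x ∈ F, x.ofLp.1 ≠ 0
  · -- Case B : some element of F has nonzero first block
    obtain ⟨x0, hx0F, hx01⟩ := hEx
    have hx0c := hsub hx0F
    have hNpos : 0 < ‖x0.ofLp.1‖ := norm_pos_iff.2 hx01
    have hG0pos : 0 < ∏ i, x0.ofLp.2 i ^ α i := lt_of_lt_of_le hNpos hx0c.2
    have h0pos : ∀ i, 0 < x0.ofLp.2 i := by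
      intro i
      rcases (hx0c.1 i).lt_or_eq with h | h
      · exact h
      · exfalso
        have : ∏ j, x0.ofLp.2 j ^ α j = 0 :=
          Finset.prod_eq_zero (Finset.mem_univ i) (by rw [← h, Real.zero_rpow (hα1 i).ne'])
        rw [this] at hG0pos; exact lt_irrefl 0 hG0pos
    by_cases hint : ∃ w ∈ F, (∀ i, 0 < w.ofLp.2 i) ∧ ‖w.ofLp.1‖ < ∏ i, w.ofLp.2 i ^ α i
    · -- F is the whole cone
      have hconeF : PowCone m n α ⊆ F := by
        obtain ⟨w, hwF, hw2, hwlt⟩ := hint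
        intro y hy
        obtain ⟨ε, hεpos, hmem⟩ := exists_sub_mem hα1 w y hw2 hwlt
        have hεy : ε • y ∈ PowCone m n α := cone_smul hα1 hαsum hy hεpos.le
        have hsum : ε • y + (w - ε • y) = w := by abel
        have hf := hface _ hεy _ hmem (by rw [hsum]; exact hwF)
        have h := hscale _ hf.1 ε⁻¹ (inv_nonneg.2 hεpos.le)
        rwa [smul_smul, inv_mul_cancel₀ hεpos.ne', one_smul] at h
      have hFeq : F = PowCone m n α := Set.Subset.antisymm hsub hconeF
      constructor
      · refine ⟨LinearMap.id, LinearMap.id_comp _, ?_⟩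
        rw [hFeq]
        simp
      · refine ⟨0, ?_, ?_⟩
        · intro x _
          have h1 : ∀ i : Fin m, (0 : E m n).ofLp.1 i * x.ofLp.1 i = 0 := fun i => by
            show (0:ℝ) * _ = 0; ring
          have h2 : ∀ i : Fin n, (0 : E m n).ofLp.2 i * x.ofLp.2 i = 0 := fun i => by
            show (0:ℝ) * _ = 0; ring
          rw [Finset.sum_congr rfl fun i _ => h1 i, Finset.sum_congr rfl fun i _ => h2 i]
          simp
        · rw [hFeq]
          ext x
          simp only [Set.mem_setOf_eq]
          constructor
          · intro hx
            refine ⟨hx, ?_⟩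
            have h1 : ∀ i : Fin m, (0 : E m n).ofLp.1 i * x.ofLp.1 i = 0 := fun i => by
              show (0:ℝ) * _ = 0; ring
            have h2 : ∀ i : Fin n, (0 : E m n).ofLp.2 i * x.ofLp.2 i = 0 := fun i => by
              show (0:ℝ) * _ = 0; ring
            rw [Finset.sum_congr rfl fun i _ => h1 i, Finset.sum_congr rfl fun i _ => h2 i]
            simp
          · exact fun hx => hx.1
    · -- no interior point in F; x0 lies on the boundary
      have hbd : ‖x0.ofLp.1‖ = ∏ i, x0.ofLp.2 i ^ α i :=
        le_antisymm hx0c.2 (not_lt.1 fun h => hint ⟨x0, hx0F, h0pos, h⟩)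
      by_cases hall : ∀ y ∈ F, pr (zOf α x0) y = 0
      · -- F is the ray generated by x0
        have hray : F = {x : E m n | ∃ c : ℝ, 0 ≤ c ∧ x = c • x0} := by
          apply Set.Subset.antisymm
          · intro y hy
            exact (key' hα1 hαsum x0 y h0pos hx01 hbd (hsub hy)).2 (hall y hy)
          · rintro x ⟨c, hc, rfl⟩
            exact hscale x0 hx0F c hc
        haveI : Nonempty (Fin n) := ⟨⟨0, lt_of_lt_of_le (by norm_num) hn⟩⟩
        set T := ∑ i, x0.ofLp.2 i with hT
        have hTpos : 0 < T := Finset.sum_pos (fun i _ => h0pos i) Finset.univ_nonempty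
        have hPapp : ∀ x : E m n, rayProj m n x0 T x = ((∑ i, x.ofLp.2 i) / T) • x0 :=
          fun x => rfl
        constructor
        · refine ⟨rayProj m n x0 T, ?_, ?_⟩
          · apply LinearMap.ext
            intro x
            rw [LinearMap.comp_apply, hPapp, hPapp]
            have h : ∑ i, (((∑ j, x.ofLp.2 j) / T) • x0).ofLp.2 i = ((∑ j, x.ofLp.2 j) / T) * T := by
              rw [Finset.mul_sum]; rfl
            rw [h, mul_div_cancel_right₀ _ hTpos.ne']
          · apply Set.Subset.antisymm
            · rintro _ ⟨x, hx, rfl⟩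
              rw [hray, hPapp]
              exact ⟨(∑ i, x.ofLp.2 i) / T,
                div_nonneg (Finset.sum_nonneg fun i _ => hx.1 i) hTpos.le, rfl⟩
            · intro y hyF
              have hyc := hsub hyF
              obtain ⟨c, hc, rfl⟩ : ∃ c : ℝ, 0 ≤ c ∧ y = c • x0 := by
                rw [hray] at hyF; exact hyF
              refine ⟨c • x0, hyc, ?_⟩
              rw [hPapp]
              have h : ∑ i, (c • x0).ofLp.2 i = c * T := by rw [hT, Finset.mul_sum]; rfl
              rw [h, mul_div_cancel_right₀ _ hTpos.ne']
        · refine ⟨zOf α x0, ?_, ?_⟩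
          · intro x hx
            exact (key' hα1 hαsum x0 x h0pos hx01 hbd hx).1
          · show F = {x | x ∈ PowCone m n α ∧ pr (zOf α x0) x = 0}
            ext y
            simp only [Set.mem_setOf_eq]
            constructor
            · intro hy
              exact ⟨hsub hy, hall y hy⟩
            · rintro ⟨hyc, hpr⟩
              have := (key' hα1 hαsum x0 y h0pos hx01 hbd hyc).2 hpr
              rw [hray]
              exact this
      · -- impossible: would produce an interior point
        exfalso
        push_neg at hall
        obtain ⟨y, hyF, hyne⟩ := hall
        have hyc := hsub hyF
        have hypos : 0 < pr (zOf α x0) y :=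
          ((key' hα1 hαsum x0 y h0pos hx01 hbd hyc).1).lt_of_ne (Ne.symm hyne)
        set s := x0 + y with hs
        have hsF : s ∈ F := haddF _ hx0F _ hyF
        have hsc := hsub hsF
        have hs2 : ∀ i, 0 < s.ofLp.2 i := fun i => by
          show 0 < x0.ofLp.2 i + y.ofLp.2 i
          exact add_pos_of_pos_of_nonneg (h0pos i) (hyc.1 i)
        have hsbd : ‖s.ofLp.1‖ = ∏ i, s.ofLp.2 i ^ α i :=
          le_antisymm hsc.2 (not_lt.1 fun h => hint ⟨s, hsF, hs2, h⟩)
        have hGspos : 0 < ∏ i, s.ofLp.2 i ^ α i :=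
          Finset.prod_pos fun i _ => Real.rpow_pos_of_pos (hs2 i) _
        have hs1 : s.ofLp.1 ≠ 0 := by
          intro h
          rw [h, norm_zero] at hsbd
          exact hGspos.ne' hsbd.symm
        have hzs0 : pr (zOf α s) s = 0 := pr_zOf_self hαsum s hs2 hsbd
        have hsplit : pr (zOf α s) x0 + pr (zOf α s) y = 0 := by
          rw [← pr_add]; rw [← hs]; exact hzs0
        have hk0 := key' hα1 hαsum s x0 hs2 hs1 hsbd hx0c
        have hky := key' hα1 hαsum s y hs2 hs1 hsbd hyc
        have hx0z : pr (zOf α s) x0 = 0 := le_antisymm (by linarith [hky.1]) hk0.1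
        have hyz : pr (zOf α s) y = 0 := by linarith [hk0.1, hky.1]
        obtain ⟨c, hc, hx0eq⟩ := hk0.2 hx0z
        obtain ⟨c', hc', hyeq⟩ := hky.2 hyz
        have hzx00 : pr (zOf α x0) x0 = 0 := pr_zOf_self hαsum x0 h0pos hbd
        have hzs : pr (zOf α x0) s = pr (zOf α x0) y := by
          rw [hs, pr_add, hzx00, zero_add]
        have heqn : pr (zOf α x0) y = c' * pr (zOf α x0) y := by
          calc pr (zOf α x0) y = pr (zOf α x0) (c' • s) := by rw [← hyeq]
            _ = c' * pr (zOf α x0) s := pr_smul _ _ _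
            _ = c' * pr (zOf α x0) y := by rw [hzs]
        have hc1 : c' = 1 := by
          have h := heqn
          have hne := hypos.ne'
          nlinarith [heqn]
        have hyeq' : y = s := by rw [hyeq, hc1, one_smul]
        have hx00 : x0 = 0 := by
          have h : x0 + y = 0 + y := by rw [zero_add, ← hs, ← hyeq']
          exact add_right_cancel h
        apply hx01
        rw [hx00]
        rfl
  · -- Case A : every element of F has zero first block
    push_neg at hEx
    set J : Finset (Fin n) := Finset.univ.filter (fun i => ∃ x ∈ F, 0 < x.ofLp.2 i) with hJ
    have hJmem : ∀ i : Fin n, i ∈ J ↔ ∃ x ∈ F, 0 < x.ofLp.2 i := fun i => by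
      rw [hJ, Finset.mem_filter]
      simp
    have hnotJ : ∀ i, i ∉ J → ∀ x ∈ F, x.ofLp.2 i = 0 := by
      intro i hi x hx
      have hle : ¬ 0 < x.ofLp.2 i := fun h => hi ((hJmem i).2 ⟨x, hx, h⟩)
      exact le_antisymm (not_lt.1 hle) ((hsub hx).1 i)
    have hwit : ∀ i ∈ J, ∃ x ∈ F, 0 < x.ofLp.2 i := fun i hi => (hJmem i).1 hi
    choose yw hywF hywpos using hwit
    set g : Fin n → E m n := fun i => if h : i ∈ J then yw i h else 0 with hg
    have hgF : ∀ i, g i ∈ F := by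
      intro i
      by_cases h : i ∈ J
      · have hgi : g i = yw i h := dif_pos h
        rw [hgi]; exact hywF i h
      · have hgi : g i = 0 := dif_neg h
        rw [hgi]; exact h0F
    have hsnd : ∀ (s : Finset (Fin n)) (i : Fin n),
        (∑ j ∈ s, g j).ofLp.2 i = ∑ j ∈ s, (g j).ofLp.2 i := by
      intro s i
      induction s using Finset.cons_induction with
      | empty => rfl
      | cons a s ha ih =>
        rw [Finset.sum_cons, Finset.sum_cons]
        show (g a).ofLp.2 i + (∑ j ∈ s, g j).ofLp.2 i = _
        rw [ih]
    have hsumFF : ∀ (s : Finset (Fin n)), ∑ i ∈ s, g i ∈ F := by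
      intro s
      induction s using Finset.cons_induction with
      | empty => simpa using h0F
      | cons a s ha ih =>
        rw [Finset.sum_cons]
        exact haddF _ (hgF a) _ ih
    set Y := ∑ i ∈ J, g i with hY
    have hYF : Y ∈ F := hsumFF J
    have hYnn : ∀ i, 0 ≤ Y.ofLp.2 i := fun i => (hsub hYF).1 i
    have hYpos : ∀ i ∈ J, 0 < Y.ofLp.2 i := by
      intro i hi
      rw [hY, hsnd]
      refine Finset.sum_pos' (fun j _ => (hsub (hgF j)).1 i) ⟨i, hi, ?_⟩
      have hgi : g i = yw i hi := dif_pos hi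
      rw [hgi]
      exact hywpos i hi
    have hY1 : Y.ofLp.1 = 0 := hEx Y hYF
    by_cases hJu : J = Finset.univ
    · exfalso
      have hYposall : ∀ i, 0 < Y.ofLp.2 i := fun i => hYpos i (hJu ▸ Finset.mem_univ i)
      set c := ∏ i, (Y.ofLp.2 i) ^ α i with hc
      have hcpos : 0 < c := Finset.prod_pos fun i _ => Real.rpow_pos_of_pos (hYposall i) _
      set v : EuclideanSpace ℝ (Fin m) := EuclideanSpace.single ⟨0, hm⟩ c with hv
      have hvnorm : ‖v‖ = c := by
        rw [hv, EuclideanSpace.norm_single, Real.norm_eq_abs, abs_of_pos hcpos]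
      have haC : (WithLp.toLp 2 (v, Y.ofLp.2) : E m n) ∈ PowCone m n α :=
        ⟨fun i => (hYposall i).le, le_of_eq (hvnorm.trans hc)⟩
      have hbC : (WithLp.toLp 2 (-v, Y.ofLp.2) : E m n) ∈ PowCone m n α :=
        ⟨fun i => (hYposall i).le, le_of_eq ((norm_neg v).trans (hvnorm.trans hc))⟩
      have hab : (WithLp.toLp 2 (v, Y.ofLp.2) : E m n) + (WithLp.toLp 2 (-v, Y.ofLp.2) : E m n) = Y + Y := by
        refine WithLp.ofLp_injective 2 (Prod.ext ?_ rfl)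
        show v + -v = Y.ofLp.1 + Y.ofLp.1
        rw [hY1, add_neg_cancel, add_zero]
      have hfa := hface _ haC _ hbC (by rw [hab]; exact haddF _ hYF _ hYF)
      have hv0 : v = 0 := hEx _ hfa.1
      rw [hv0, norm_zero] at hvnorm
      exact hcpos.ne' hvnorm.symm
    · obtain ⟨i0, hi0⟩ : ∃ i, i ∉ J := by
        by_contra h
        push_neg at h
        exact hJu (Finset.eq_univ_iff_forall.2 h)
      have hFJ : F = {x : E m n | x.ofLp.1 = 0 ∧ (∀ i, 0 ≤ x.ofLp.2 i) ∧ ∀ i ∉ J, x.ofLp.2 i = 0} := by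
        apply Set.Subset.antisymm
        · intro x hx
          exact ⟨hEx x hx, (hsub hx).1, fun i hi => hnotJ i hi x hx⟩
        · rintro x ⟨hx1, hx2, hx3⟩
          set t := 1 + ∑ i ∈ J, x.ofLp.2 i / Y.ofLp.2 i with ht
          have htnn : 0 ≤ ∑ i ∈ J, x.ofLp.2 i / Y.ofLp.2 i :=
            Finset.sum_nonneg fun i hi => div_nonneg (hx2 i) (hYpos i hi).le
          have htpos : 0 < t := by rw [ht]; linarith
          have hbound : ∀ i ∈ J, x.ofLp.2 i ≤ t * Y.ofLp.2 i := by
            intro i hi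
            have h1 : x.ofLp.2 i / Y.ofLp.2 i ≤ ∑ j ∈ J, x.ofLp.2 j / Y.ofLp.2 j :=
              Finset.single_le_sum (fun j hj => div_nonneg (hx2 j) (hYpos j hj).le) hi
            have h2 : x.ofLp.2 i / Y.ofLp.2 i ≤ t := by rw [ht]; linarith
            exact (div_le_iff₀ (hYpos i hi)).1 h2
          have hxcone : x ∈ PowCone m n α := ⟨hx2, by
            rw [hx1, norm_zero]
            exact prod_rpow_nonneg hα1 _ hx2⟩
          have hd2 : ∀ i, 0 ≤ t * Y.ofLp.2 i - x.ofLp.2 i := by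
            intro i
            by_cases hi : i ∈ J
            · linarith [hbound i hi]
            · rw [hx3 i hi, sub_zero]
              exact mul_nonneg htpos.le (hYnn i)
          have hdiff : t • Y - x ∈ PowCone m n α := by
            refine ⟨fun i => ?_, ?_⟩
            · show 0 ≤ t * Y.ofLp.2 i - x.ofLp.2 i
              exact hd2 i
            · show ‖t • Y.ofLp.1 - x.ofLp.1‖ ≤ ∏ i, (t * Y.ofLp.2 i - x.ofLp.2 i) ^ α i
              rw [hY1, hx1, smul_zero, sub_zero, norm_zero]
              exact prod_rpow_nonneg hα1 _ hd2
          have hadd : x + (t • Y - x) = t • Y := by abel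
          have hfa := hface x hxcone _ hdiff (by rw [hadd]; exact hscale Y hYF t htpos.le)
          exact hfa.1
      constructor
      · refine ⟨coordProj m n J, ?_, ?_⟩
        · apply LinearMap.ext
          intro x
          rw [LinearMap.comp_apply]
          refine WithLp.ofLp_injective 2 (Prod.ext rfl (PiLp.ext fun i => ?_))
          rw [coordProj_snd, coordProj_snd]
          split_ifs <;> rfl
        · apply Set.Subset.antisymm
          · rintro _ ⟨x, hx, rfl⟩
            rw [hFJ]
            refine ⟨coordProj_fst m n J x, fun i => ?_, fun i hi => ?_⟩
            · rw [coordProj_snd]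
              split_ifs with h
              exacts [hx.1 i, le_refl 0]
            · rw [coordProj_snd, if_neg hi]
          · intro x hxF
            have hx' : x.ofLp.1 = 0 ∧ (∀ i, 0 ≤ x.ofLp.2 i) ∧ ∀ i ∉ J, x.ofLp.2 i = 0 := by
              rw [hFJ] at hxF
              exact hxF
            refine ⟨x, hsub hxF, ?_⟩
            refine WithLp.ofLp_injective 2 (Prod.ext ?_ (PiLp.ext fun i => ?_))
            · rw [coordProj_fst]
              exact hx'.1.symm
            · rw [coordProj_snd]
              split_ifs with h
              · rfl
              · exact (hx'.2.2 i h).symm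
      · set zz : E m n := WithLp.toLp 2 ((0 : EuclideanSpace ℝ (Fin m)),
          WithLp.toLp 2 (fun i => if i ∈ J then 0 else 1)) with hzz
        have hz1 : ∀ i, zz.ofLp.1 i = (0:ℝ) := fun i => rfl
        have hz2 : ∀ i, zz.ofLp.2 i = if i ∈ J then 0 else 1 := fun i => rfl
        have hzero : ∀ x : E m n, ∑ i, zz.ofLp.1 i * x.ofLp.1 i = 0 := fun x =>
          Finset.sum_eq_zero fun i _ => by rw [hz1, zero_mul]
        refine ⟨zz, ?_, ?_⟩
        · intro x hx
          rw [hzero, zero_add]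
          refine Finset.sum_nonneg fun i _ => ?_
          rw [hz2]
          split_ifs
          · rw [zero_mul]
          · rw [one_mul]
            exact hx.1 i
        · ext x
          simp only [Set.mem_setOf_eq]
          constructor
          · intro hxF
            refine ⟨hsub hxF, ?_⟩
            rw [hzero, zero_add]
            refine Finset.sum_eq_zero fun i _ => ?_
            rw [hz2]
            split_ifs with h
            · rw [zero_mul]
            · rw [one_mul]
              exact hnotJ i h x hxF
          · rintro ⟨hxc, hpair⟩
            rw [hzero, zero_add] at hpair
            have hterm := (Finset.sum_eq_zero_iff_of_nonneg (by
              intro i _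
              rw [hz2]
              split_ifs
              · rw [zero_mul]
              · rw [one_mul]
                exact hxc.1 i)).1 hpair
            have hxJ : ∀ i ∉ J, x.ofLp.2 i = 0 := by
              intro i hi
              have h := hterm i (Finset.mem_univ i)
              rw [hz2, if_neg hi, one_mul] at h
              exact h
            have hx1 : x.ofLp.1 = 0 := by
              have hp : ∏ i, x.ofLp.2 i ^ α i = 0 :=
                Finset.prod_eq_zero (Finset.mem_univ i0)
                  (by rw [hxJ i0 hi0, Real.zero_rpow (hα1 i0).ne'])
              have h := hxc.2
              rw [hp] at h
              exact norm_le_zero_iff.1 h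
            rw [hFJ]
            exact ⟨hx1, hxc.1, hxJ⟩
end
end

section
/- Let z = (0, z̃) ∈ ∂(P^α_{m,n})^* \ {0} with z̄ = 0, let I = {i : z̃ᵢ > 0}, F_z = {z}^⊥ ∩ P^α_{m,n}, and β = ∑_{i ∈ I} αᵢ ∈ (0,1). Then for every η > 0 and every q ∈ {z}^⊥ with ‖q‖ ≤ η, one has dist(q, F_z) ≤ κ · dist(q, P^α_{m,n})^β for some constant κ depending only on z, η, n (a Hölderian error bound with exponent β). -/
open Finset

noncomputable section

lemma my_norm_le_add {m n : ℕ} (x : E m n) : ‖x‖ ≤ ‖x.ofLp.1‖ + ‖x.ofLp.2‖ := by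
  have h : ‖x‖^2 = ‖x.ofLp.1‖^2 + ‖x.ofLp.2‖^2 := WithLp.prod_norm_sq_eq_of_L2 x
  nlinarith [norm_nonneg x, norm_nonneg x.ofLp.1, norm_nonneg x.ofLp.2]

lemma my_fst_le {m n : ℕ} (x : E m n) : ‖x.ofLp.1‖ ≤ ‖x‖ := by
  have h : ‖x‖^2 = ‖x.ofLp.1‖^2 + ‖x.ofLp.2‖^2 := WithLp.prod_norm_sq_eq_of_L2 x
  nlinarith [norm_nonneg x, norm_nonneg x.ofLp.1, norm_nonneg x.ofLp.2]

lemma my_snd_le {m n : ℕ} (x : E m n) : ‖x.ofLp.2‖ ≤ ‖x‖ := by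
  have h : ‖x‖^2 = ‖x.ofLp.1‖^2 + ‖x.ofLp.2‖^2 := WithLp.prod_norm_sq_eq_of_L2 x
  nlinarith [norm_nonneg x, norm_nonneg x.ofLp.1, norm_nonneg x.ofLp.2]

lemma my_coord_le {n : ℕ} (x : EuclideanSpace ℝ (Fin n)) (i : Fin n) : |x i| ≤ ‖x‖ := by
  rw [EuclideanSpace.norm_eq]
  have h1 : |x i| = Real.sqrt ((x i)^2) := (Real.sqrt_sq_eq_abs _).symm
  rw [h1]
  apply Real.sqrt_le_sqrt
  have := Finset.single_le_sum (f := fun j => ‖x j‖^2) (fun j _ => by positivity)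
    (Finset.mem_univ i)
  simpa [Real.norm_eq_abs, sq_abs] using this

lemma my_norm_le_of_coord {n : ℕ} (hn : 1 ≤ n) (x : EuclideanSpace ℝ (Fin n)) (B : ℝ) (hB : 0 ≤ B)
    (h : ∀ i, |x i| ≤ B) : ‖x‖ ≤ n * B := by
  rw [EuclideanSpace.norm_eq]
  have h1 : ∑ i, ‖x i‖^2 ≤ (n * B)^2 := by
    calc ∑ i, ‖x i‖^2 ≤ ∑ _i : Fin n, B^2 := by
          apply Finset.sum_le_sum
          intro i _
          rw [Real.norm_eq_abs]
          exact pow_le_pow_left₀ (abs_nonneg _) (h i) 2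
      _ = n * B^2 := by simp [mul_comm]
      _ ≤ (n * B)^2 := by
          have h2 : (1:ℝ) ≤ (n:ℝ) := by exact_mod_cast hn
          nlinarith [sq_nonneg B]
  calc Real.sqrt (∑ i, ‖x i‖^2) ≤ Real.sqrt ((n*B)^2) := Real.sqrt_le_sqrt h1
    _ = n * B := Real.sqrt_sq (by positivity)

lemma powCone_isClosed (m n : ℕ) (α : Fin n → ℝ) (hα : ∀ i, 0 ≤ α i) :
    IsClosed (PowCone m n α) := by
  have cont1 : Continuous fun x : E m n => x.ofLp.1 :=
    continuous_fst.comp (WithLp.prod_continuous_ofLp _ _ _)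
  have cont2 : Continuous fun x : E m n => x.ofLp.2 :=
    continuous_snd.comp (WithLp.prod_continuous_ofLp _ _ _)
  have conti : ∀ i, Continuous fun x : E m n => x.ofLp.2 i := fun i =>
    (continuous_apply i).comp ((PiLp.continuous_ofLp _ _).comp cont2)
  have : PowCone m n α =
      (⋂ i, {x : E m n | 0 ≤ x.ofLp.2 i}) ∩ {x : E m n | ‖x.ofLp.1‖ ≤ ∏ i, x.ofLp.2 i ^ α i} := by
    ext x
    simp [PowCone, Set.mem_iInter]
  rw [this]
  refine IsClosed.inter (isClosed_iInter fun i => isClosed_le continuous_const (conti i)) ?_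
  refine isClosed_le cont1.norm ?_
  exact continuous_finset_prod _ fun i _ => (Real.continuous_rpow_const (hα i)).comp (conti i)

lemma zero_mem_powCone (m n : ℕ) (hn : 2 ≤ n) (α : Fin n → ℝ) (hα : ∀ i, 0 < α i) :
    (0 : E m n) ∈ PowCone m n α := by
  rw [PowCone, Set.mem_setOf_eq]
  constructor
  · intro i; exact le_refl 0
  · have : ∀ i : Fin n, ((0 : E m n).ofLp.2 i) ^ α i = 0 := fun i =>
      Real.zero_rpow (hα i).ne'
    rw [Finset.prod_eq_zero (Finset.mem_univ ⟨0, by omega⟩) (this _)]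
    simp

set_option maxHeartbeats 1000000 in
/-- Hölderian error bound with exponent `β = ∑_{i ∈ I} αᵢ` for the face exposed by
`z = (0, z̃)`. -/
theorem powCone_holder_error_bound (m n : ℕ) (hm : 1 ≤ m) (hn : 2 ≤ n) (α : Fin n → ℝ)
    (hα : ∀ i, 0 < α i ∧ α i < 1) (hαsum : ∑ i, α i = 1)
    (z : E m n) (hz1 : z.ofLp.1 = 0) (hz2 : ∀ i, 0 ≤ z.ofLp.2 i) (hzne : z ≠ 0)
    (hzbd : ‖z.ofLp.1‖ = ∏ i, (z.ofLp.2 i / α i) ^ α i)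
    (I : Finset (Fin n)) (hI : ∀ i, i ∈ I ↔ 0 < z.ofLp.2 i)
    (β : ℝ) (hβ : β = ∑ i ∈ I, α i)
    (Fz : Set (E m n))
    (hFz : Fz = {x | x ∈ PowCone m n α ∧
        (∑ i, z.ofLp.1 i * x.ofLp.1 i) + (∑ i, z.ofLp.2 i * x.ofLp.2 i) = 0})
    (η : ℝ) (hη : 0 < η) :
    ∃ κ : ℝ, 0 < κ ∧ ∀ q : E m n,
      (∑ i, z.ofLp.1 i * q.ofLp.1 i) + (∑ i, z.ofLp.2 i * q.ofLp.2 i) = 0 → ‖q‖ ≤ η →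
      Metric.infDist q Fz ≤ κ * Metric.infDist q (PowCone m n α) ^ β := by
  classical
  have hα0 : ∀ i, (0:ℝ) ≤ α i := fun i => (hα i).1.le
  have hzI0 : ∀ i, i ∉ I → z.ofLp.2 i = 0 := by
    intro i hi
    by_contra h
    exact hi ((hI i).mpr (lt_of_le_of_ne (hz2 i) (Ne.symm h)))
  have hIne : I.Nonempty := by
    rw [Finset.nonempty_iff_ne_empty]
    intro h
    apply hzne
    have hz2' : z.ofLp.2 = 0 := by
      ext i
      exact hzI0 i (by simp [h])
    have : ‖z‖ ^ 2 = 0 := by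
      rw [show ‖z‖^2 = ‖z.ofLp.1‖^2 + ‖z.ofLp.2‖^2 from WithLp.prod_norm_sq_eq_of_L2 z, hz1, hz2']
      simp
    have hz : ‖z‖ = 0 := by nlinarith [norm_nonneg z]
    exact norm_eq_zero.mp hz
  set c : ℝ := I.inf' hIne (fun i => z.ofLp.2 i) with hc_def
  have hc : 0 < c := by
    rw [hc_def, Finset.lt_inf'_iff]
    exact fun i hi => (hI i).mp hi
  set Z : ℝ := ∑ i, z.ofLp.2 i with hZ_def
  have hcZ : c ≤ Z := by
    obtain ⟨i0, hi0, hi0e⟩ := Finset.exists_mem_eq_inf' hIne (fun i => z.ofLp.2 i)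
    rw [hc_def, hi0e]
    exact Finset.single_le_sum (fun j _ => hz2 j) (Finset.mem_univ i0)
  set C : ℝ := Z / c with hC_def
  have hC1 : 1 ≤ C := (one_le_div hc).mpr hcZ
  have hβ0 : 0 < β := by
    rw [hβ]; exact Finset.sum_pos (fun i _ => (hα i).1) hIne
  have hβ1 : β ≤ 1 := by
    rw [hβ, ← hαsum]
    exact Finset.sum_le_sum_of_subset_of_nonneg (Finset.subset_univ I) (fun i _ _ => hα0 i)
  have hcompl : ∑ i ∈ Iᶜ, α i = 1 - β := by
    have := Finset.sum_add_sum_compl I α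
    rw [hαsum] at this
    rw [hβ]; linarith
  have hPclosed : IsClosed (PowCone m n α) := powCone_isClosed m n α hα0
  have hzeroP : (0 : E m n) ∈ PowCone m n α := zero_mem_powCone m n hn α (fun i => (hα i).1)
  set κ := (C+1)^β * (2*η)^(1-β) + (1 + n*(C+1)) * η^(1-β) with hκ_def
  have hκpos : 0 < κ := by
    have h1 : (0:ℝ) < (1 + n*(C+1)) * η^(1-β) := by positivity
    have h2 : (0:ℝ) ≤ (C+1)^β * (2*η)^(1-β) := by positivity
    linarith
  refine ⟨κ, hκpos, ?_⟩
  intro q hqz hqη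
  have hsum : ∑ i ∈ I, z.ofLp.2 i * q.ofLp.2 i = 0 := by
    have h1 : ∑ i, z.ofLp.1 i * q.ofLp.1 i = 0 := by rw [hz1]; simp
    rw [h1, zero_add] at hqz
    rw [← hqz]
    exact Finset.sum_subset (Finset.subset_univ I)
      (fun i _ hi => by rw [hzI0 i hi, zero_mul])
  set d := Metric.infDist q (PowCone m n α) with hd_def
  have hd0 : 0 ≤ d := Metric.infDist_nonneg
  have hdη : d ≤ η := by
    have h1 : d ≤ dist q 0 := Metric.infDist_le_dist_of_mem hzeroP
    rw [dist_zero_right] at h1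
    linarith
  obtain ⟨p, hpP, hpd⟩ := hPclosed.exists_infDist_eq_dist ⟨0, hzeroP⟩ q
  have hdist : dist q p = d := hpd.symm
  have hqp : ‖q - p‖ = d := by rw [← hdist, dist_eq_norm]
  have hsub1 : (q - p).ofLp.1 = q.ofLp.1 - p.ofLp.1 := rfl
  have hsub2 : (q - p).ofLp.2 = q.ofLp.2 - p.ofLp.2 := rfl
  have hq1p1 : ‖q.ofLp.1 - p.ofLp.1‖ ≤ d := by
    have h1 := my_fst_le (q - p)
    rw [hsub1, hqp] at h1
    exact h1
  have hq2p2 : ∀ i, |q.ofLp.2 i - p.ofLp.2 i| ≤ d := by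
    intro i
    have h1 := my_coord_le (q.ofLp.2 - p.ofLp.2) i
    have h2 := my_snd_le (q - p)
    rw [hsub2, hqp] at h2
    have h3 : (q.ofLp.2 - p.ofLp.2) i = q.ofLp.2 i - p.ofLp.2 i := rfl
    rw [h3] at h1
    linarith
  have hqlow : ∀ i, -d ≤ q.ofLp.2 i := by
    intro i
    have h1 := (abs_le.mp (hq2p2 i)).1
    have h2 := hpP.1 i
    linarith
  have hqup : ∀ i, |q.ofLp.2 i| ≤ η := fun i =>
    le_trans (le_trans (my_coord_le q.ofLp.2 i) (my_snd_le q)) hqη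
  have hpub : ∀ i, p.ofLp.2 i ≤ q.ofLp.2 i + d := by
    intro i
    have h1 := (abs_le.mp (hq2p2 i)).1
    linarith
  have hqI : ∀ i ∈ I, |q.ofLp.2 i| ≤ C * d := by
    intro i hi
    have hzi : c ≤ z.ofLp.2 i := Finset.inf'_le _ hi
    have hzipos : 0 < z.ofLp.2 i := (hI i).mp hi
    have hkey : z.ofLp.2 i * q.ofLp.2 i ≤ Z * d := by
      have hsum' : z.ofLp.2 i * q.ofLp.2 i + ∑ j ∈ I.erase i, z.ofLp.2 j * q.ofLp.2 j = 0 :=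
        (Finset.add_sum_erase I (fun j => z.ofLp.2 j * q.ofLp.2 j) hi).trans hsum
      have hterm : ∀ j ∈ I.erase i, -(z.ofLp.2 j * q.ofLp.2 j) ≤ z.ofLp.2 j * d := by
        intro j hj
        have h1 := hqlow j
        have h2 := hz2 j
        have h3 : z.ofLp.2 j * (-q.ofLp.2 j) ≤ z.ofLp.2 j * d := mul_le_mul_of_nonneg_left (by linarith) h2
        have h4 : z.ofLp.2 j * (-q.ofLp.2 j) = -(z.ofLp.2 j * q.ofLp.2 j) := by ring
        linarith
      have h4 : ∑ j ∈ I.erase i, (-(z.ofLp.2 j * q.ofLp.2 j)) ≤ ∑ j ∈ I.erase i, z.ofLp.2 j * d :=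
        Finset.sum_le_sum hterm
      have h6 : ∑ j ∈ I.erase i, z.ofLp.2 j ≤ Z := by
        rw [hZ_def]
        exact Finset.sum_le_sum_of_subset_of_nonneg (Finset.subset_univ _)
          (fun j _ _ => hz2 j)
      have h5 : ∑ j ∈ I.erase i, z.ofLp.2 j * d = (∑ j ∈ I.erase i, z.ofLp.2 j) * d :=
        (Finset.sum_mul (I.erase i) (fun j => z.ofLp.2 j) d).symm
      have h8 : (∑ j ∈ I.erase i, z.ofLp.2 j) * d ≤ Z * d :=
        mul_le_mul_of_nonneg_right h6 hd0
      rw [Finset.sum_neg_distrib] at h4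
      linarith
    have hup : q.ofLp.2 i ≤ C * d := by
      rcases le_or_gt (q.ofLp.2 i) 0 with h | h
      · have h9 : 0 ≤ C * d := mul_nonneg (by linarith) hd0
        linarith
      · rw [hC_def, div_mul_eq_mul_div, le_div_iff₀ hc]
        have h9 : c * q.ofLp.2 i ≤ z.ofLp.2 i * q.ofLp.2 i := mul_le_mul_of_nonneg_right hzi h.le
        linarith
    refine abs_le.mpr ⟨?_, hup⟩
    have h10 := hqlow i
    have h11 : d ≤ C * d := le_mul_of_one_le_left hd0 hC1
    linarith
  rcases eq_or_lt_of_le hd0 with hd | hdpos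
  · have hqp0 : q = p := by
      have h1 : dist q p = 0 := by rw [hdist, ← hd]
      exact dist_eq_zero.mp h1
    have hqF : q ∈ Fz := by
      rw [hFz]
      exact ⟨hqp0 ▸ hpP, hqz⟩
    rw [Metric.infDist_zero_of_mem hqF, ← hd, Real.zero_rpow hβ0.ne', mul_zero]
  · set y2 : EuclideanSpace ℝ (Fin n) :=
      (WithLp.equiv 2 _).symm (fun i => if i ∈ I then 0 else max (q.ofLp.2 i) 0) with hy2_def
    set y : E m n := (WithLp.equiv 2 _).symm (0, y2) with hy_def
    have hy1 : y.ofLp.1 = 0 := rfl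
    have hy2 : ∀ i, y.ofLp.2 i = if i ∈ I then 0 else max (q.ofLp.2 i) 0 := fun i => rfl
    have hy2nn : ∀ i, 0 ≤ y.ofLp.2 i := by
      intro i
      rw [hy2]
      split
      · exact le_refl 0
      · exact le_max_right _ _
    have hyP : y ∈ PowCone m n α := by
      refine ⟨hy2nn, ?_⟩
      rw [hy1, norm_zero]
      exact Finset.prod_nonneg fun i _ => Real.rpow_nonneg (hy2nn i) _
    have hyF : y ∈ Fz := by
      rw [hFz]
      refine ⟨hyP, ?_⟩
      have h1 : ∑ i, z.ofLp.1 i * y.ofLp.1 i = 0 := by rw [hz1]; simp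
      have h2 : ∑ i, z.ofLp.2 i * y.ofLp.2 i = 0 := by
        apply Finset.sum_eq_zero
        intro i _
        by_cases hi : i ∈ I
        · rw [hy2, if_pos hi, mul_zero]
        · rw [hzI0 i hi, zero_mul]
      rw [h1, h2, add_zero]
    have hqy1 : (q - y).ofLp.1 = q.ofLp.1 := by
      show q.ofLp.1 - y.ofLp.1 = q.ofLp.1
      rw [hy1, sub_zero]
    have hqy2 : (q - y).ofLp.2 = q.ofLp.2 - y.ofLp.2 := rfl
    have hstep1 : Metric.infDist q Fz ≤ ‖q.ofLp.1‖ + ‖q.ofLp.2 - y.ofLp.2‖ := by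
      have h1 : Metric.infDist q Fz ≤ dist q y := Metric.infDist_le_dist_of_mem hyF
      rw [dist_eq_norm] at h1
      have h2 := my_norm_le_add (q - y)
      rw [hqy1, hqy2] at h2
      linarith
    have habs : ∀ i, |q.ofLp.2 i - y.ofLp.2 i| ≤ (C+1) * d := by
      intro i
      by_cases hi : i ∈ I
      · rw [hy2, if_pos hi, sub_zero]
        have h1 := hqI i hi
        have h2 : C * d + d = (C+1) * d := by ring
        linarith
      · rw [hy2, if_neg hi]
        rcases le_or_gt 0 (q.ofLp.2 i) with h | h
        · rw [max_eq_left h, sub_self, abs_zero]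
          exact mul_nonneg (by linarith) hd0
        · rw [max_eq_right h.le, sub_zero, abs_of_nonpos h.le]
          have h1 := hqlow i
          have h2 : d ≤ (C+1) * d := le_mul_of_one_le_left hd0 (by linarith)
          linarith
    have hT2 : ‖q.ofLp.2 - y.ofLp.2‖ ≤ n * ((C+1) * d) := by
      refine my_norm_le_of_coord (by omega) _ _ (mul_nonneg (by linarith) hd0) ?_
      intro i
      have h1 : (q.ofLp.2 - y.ofLp.2) i = q.ofLp.2 i - y.ofLp.2 i := rfl
      rw [h1]
      exact habs i
    have hpub2 : ∀ i ∈ I, p.ofLp.2 i ≤ (C+1) * d := by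
      intro i hi
      have h1 := hpub i
      have h2 := (abs_le.mp (hqI i hi)).2
      linarith
    have hpub3 : ∀ i, p.ofLp.2 i ≤ 2 * η := by
      intro i
      have h1 := hpub i
      have h2 := (abs_le.mp (hqup i)).2
      linarith
    have hCd : (0:ℝ) < (C+1) * d := mul_pos (by linarith) hdpos
    have hprod : ∏ i, p.ofLp.2 i ^ α i ≤ (C+1)^β * d^β * (2*η)^(1-β) := by
      rw [← Finset.prod_mul_prod_compl I (fun i => p.ofLp.2 i ^ α i)]
      have hIbound : ∏ i ∈ I, p.ofLp.2 i ^ α i ≤ ((C+1)*d)^β := by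
        calc ∏ i ∈ I, p.ofLp.2 i ^ α i ≤ ∏ i ∈ I, ((C+1)*d) ^ α i :=
              Finset.prod_le_prod (fun i _ => Real.rpow_nonneg (hpP.1 i) _)
                (fun i hi => Real.rpow_le_rpow (hpP.1 i) (hpub2 i hi) (hα0 i))
          _ = ((C+1)*d)^β := by
              rw [hβ]
              exact (Real.rpow_sum_of_pos hCd α I).symm
      have hCbound : ∏ i ∈ Iᶜ, p.ofLp.2 i ^ α i ≤ (2*η)^(1-β) := by
        calc ∏ i ∈ Iᶜ, p.ofLp.2 i ^ α i ≤ ∏ i ∈ Iᶜ, (2*η) ^ α i :=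
              Finset.prod_le_prod (fun i _ => Real.rpow_nonneg (hpP.1 i) _)
                (fun i _ => Real.rpow_le_rpow (hpP.1 i) (hpub3 i) (hα0 i))
          _ = (2*η)^(1-β) := by
              rw [← hcompl]
              exact (Real.rpow_sum_of_pos (by linarith) α Iᶜ).symm
      calc (∏ i ∈ I, p.ofLp.2 i ^ α i) * ∏ i ∈ Iᶜ, p.ofLp.2 i ^ α i
          ≤ ((C+1)*d)^β * (2*η)^(1-β) :=
            mul_le_mul hIbound hCbound
              (Finset.prod_nonneg fun i _ => Real.rpow_nonneg (hpP.1 i) _)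
              (Real.rpow_nonneg hCd.le _)
        _ = (C+1)^β * d^β * (2*η)^(1-β) := by
            rw [Real.mul_rpow (by linarith : (0:ℝ) ≤ C+1) hd0]
    have hT1 : ‖q.ofLp.1‖ ≤ (C+1)^β * d^β * (2*η)^(1-β) + d := by
      have h1 : ‖q.ofLp.1‖ ≤ ‖p.ofLp.1‖ + ‖q.ofLp.1 - p.ofLp.1‖ := by
        have h2 := norm_add_le p.ofLp.1 (q.ofLp.1 - p.ofLp.1)
        have h3 : p.ofLp.1 + (q.ofLp.1 - p.ofLp.1) = q.ofLp.1 := by abel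
        rw [h3] at h2
        exact h2
      linarith [hpP.2, hprod, hq1p1]
    have hdβ : d ≤ η^(1-β) * d^β := by
      have h1 : d^(1-β) ≤ η^(1-β) := Real.rpow_le_rpow hd0 hdη (by linarith)
      have h2 : d^(1-β) * d^β = d := by
        rw [← Real.rpow_add hdpos]
        norm_num
      calc d = d^(1-β) * d^β := h2.symm
        _ ≤ η^(1-β) * d^β := mul_le_mul_of_nonneg_right h1 (Real.rpow_nonneg hd0 β)
    have hfinal : ‖q.ofLp.1‖ + ‖q.ofLp.2 - y.ofLp.2‖ ≤ κ * d^β := by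
      have hn0 : (0:ℝ) ≤ n := Nat.cast_nonneg n
      have h4 : (1 + n*(C+1)) * d ≤ (1 + n*(C+1)) * (η^(1-β) * d^β) := by
        apply mul_le_mul_of_nonneg_left hdβ
        have h7 := mul_nonneg hn0 (by linarith : (0:ℝ) ≤ C+1)
        linarith
      have h5 : κ * d^β = (C+1)^β * d^β * (2*η)^(1-β) + (1 + n*(C+1)) * (η^(1-β) * d^β) := by
        rw [hκ_def]; ring
      rw [h5]
      have h6 : (1 + n*(C+1)) * d = d + n*((C+1)*d) := by ring
      linarith
    linarith [hstep1, hfinal]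
end
end

section
/- Let v = (v̄, ṽ) ∈ ∂P^α_{m,n} with ‖v‖ ≤ η, and let I ⊊ {1,…,n} be nonempty with β = ∑_{i∈I} αᵢ. Then ‖v̄‖ ≤ η^{1-β} · ‖ṽ_I‖^β, where ‖ṽ_I‖ = sqrt(∑_{i∈I} ṽᵢ²). -/
open Finset

noncomputable section

/-- For `v` on the boundary of the power cone with `‖v‖ ≤ η` and a nonempty proper index set
`I` with `β = ∑_{i∈I} αᵢ`, one has `‖v̄‖ ≤ η^{1-β} ‖ṽ_I‖^β`. -/
theorem powCone_boundary_norm_bound (m n : ℕ) (hm : 1 ≤ m) (hn : 2 ≤ n) (α : Fin n → ℝ)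
    (hα : ∀ i, 0 < α i ∧ α i < 1) (hαsum : ∑ i, α i = 1)
    (η : ℝ) (hη : 0 < η)
    (v : E m n) (hv2 : ∀ i, 0 ≤ v.ofLp.2 i) (hvbd : ‖v.ofLp.1‖ = ∏ i, v.ofLp.2 i ^ α i)
    (hvη : ‖v‖ ≤ η)
    (I : Finset (Fin n)) (hIne : I.Nonempty) (hIproper : I ≠ Finset.univ)
    (β : ℝ) (hβ : β = ∑ i ∈ I, α i) :
    ‖v.ofLp.1‖ ≤ η ^ (1 - β) * Real.sqrt (∑ i ∈ I, v.ofLp.2 i ^ 2) ^ β := by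
  set S := Real.sqrt (∑ i ∈ I, v.ofLp.2 i ^ 2) with hS
  have hS0 : 0 ≤ S := Real.sqrt_nonneg _
  have key : ∀ (s : Finset (Fin n)) (i : Fin n), i ∈ s →
      v.ofLp.2 i ≤ Real.sqrt (∑ j ∈ s, v.ofLp.2 j ^ 2) := by
    intro s i hi
    rw [← Real.sqrt_sq (hv2 i)]
    exact Real.sqrt_le_sqrt (Finset.single_le_sum (f := fun j => v.ofLp.2 j ^ 2)
      (fun j _ => sq_nonneg _) hi)
  have hnorm2 : ‖v.ofLp.2‖ = Real.sqrt (∑ j, v.ofLp.2 j ^ 2) := by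
    rw [EuclideanSpace.norm_eq]
    congr 1
    exact Finset.sum_congr rfl fun j _ => by rw [Real.norm_eq_abs, sq_abs]
  have hsnd_le : ‖v.ofLp.2‖ ≤ ‖v‖ := by
    rw [WithLp.prod_norm_eq_of_L2]
    exact Real.le_sqrt_of_sq_le (le_add_of_nonneg_left (sq_nonneg _))
  have hη2 : ∀ i, v.ofLp.2 i ≤ η := fun i =>
    le_trans (le_trans (key univ i (mem_univ i)) (by rw [← hnorm2]; exact hsnd_le)) hvη
  have hcompl : ∑ i ∈ Iᶜ, α i = 1 - β := by
    have := Finset.sum_add_sum_compl I α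
    rw [hαsum] at this; linarith [hβ ▸ this]
  have h1 : ∏ i ∈ I, v.ofLp.2 i ^ α i ≤ S ^ β := by
    rw [hβ, Real.rpow_sum_of_nonneg hS0 (fun i _ => (hα i).1.le)]
    exact Finset.prod_le_prod (fun i _ => Real.rpow_nonneg (hv2 i) _)
      (fun i hi => Real.rpow_le_rpow (hv2 i) (key I i hi) (hα i).1.le)
  have h2 : ∏ i ∈ Iᶜ, v.ofLp.2 i ^ α i ≤ η ^ (1 - β) := by
    rw [← hcompl, Real.rpow_sum_of_nonneg hη.le (fun i _ => (hα i).1.le)]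
    exact Finset.prod_le_prod (fun i _ => Real.rpow_nonneg (hv2 i) _)
      (fun i _ => Real.rpow_le_rpow (hv2 i) (hη2 i) (hα i).1.le)
  calc ‖v.ofLp.1‖ = (∏ i ∈ I, v.ofLp.2 i ^ α i) * ∏ i ∈ Iᶜ, v.ofLp.2 i ^ α i := by
        rw [hvbd, Finset.prod_mul_prod_compl]
    _ ≤ S ^ β * (η ^ (1 - β)) :=
        mul_le_mul h1 h2 (Finset.prod_nonneg fun i _ => Real.rpow_nonneg (hv2 i) _)
          (Real.rpow_nonneg hS0 _)
    _ = η ^ (1 - β) * S ^ β := mul_comm _ _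
end
end

section
/- Fix z = (0, z̃) ∈ ∂(P^α_{m,n})^* \ {0} with z̄ = 0 and I = {i : z̃ᵢ > 0} ≠ ∅, β = ∑_{i∈I} αᵢ, F_z = {z}^⊥ ∩ P^α_{m,n}, and a unit vector u ∈ ℝ^m. For ε ∈ (0,1) define q_ε = (ε^β u, q̃_ε) where (q̃_ε)ᵢ = 0 for i ∈ I and (q̃_ε)ᵢ = 1 for i ∉ I. Then q_ε ∈ {z}^⊥, dist(q_ε, F_z) = ε^β, and dist(q_ε, P^α_{m,n}) ≤ |I|·ε; consequently limsup_{ε↓0} dist(q_ε, P^α_{m,n})^β / dist(q_ε, F_z) ≤ |I|^β < ∞. -/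
open Finset

noncomputable section

/-- Optimality of the exponent `β`: along the curve `q_ε` one has `q_ε ∈ {z}^⊥`,
`dist(q_ε, F_z) = ε^β`, `dist(q_ε, P) ≤ |I| ε`, and hence
`limsup_{ε↓0} dist(q_ε,P)^β / dist(q_ε,F_z) ≤ |I|^β`. -/
theorem powCone_beta_optimality (m n : ℕ) (hm : 1 ≤ m) (hn : 2 ≤ n) (α : Fin n → ℝ)
    (hα : ∀ i, 0 < α i ∧ α i < 1) (hαsum : ∑ i, α i = 1)
    (z : E m n) (hz1 : z.ofLp.1 = 0) (hz2 : ∀ i, 0 ≤ z.ofLp.2 i) (hzne : z ≠ 0)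
    (hzbd : ‖z.ofLp.1‖ = ∏ i, (z.ofLp.2 i / α i) ^ α i)
    (I : Finset (Fin n)) (hI : ∀ i, i ∈ I ↔ 0 < z.ofLp.2 i)
    (β : ℝ) (hβ : β = ∑ i ∈ I, α i)
    (Fz : Set (E m n))
    (hFz : Fz = {x : E m n | x.ofLp.1 = 0 ∧ (∀ i, 0 ≤ x.ofLp.2 i) ∧ ∀ i ∈ I, x.ofLp.2 i = 0})
    (u : EuclideanSpace ℝ (Fin m)) (hu : ‖u‖ = 1)
    (q : ℝ → E m n)
    (hq1 : ∀ ε ∈ Set.Ioo (0:ℝ) 1, (q ε).ofLp.1 = (ε ^ β) • u)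
    (hq2 : ∀ ε ∈ Set.Ioo (0:ℝ) 1, ∀ i, (q ε).ofLp.2 i = if i ∈ I then 0 else 1) :
    (∀ ε ∈ Set.Ioo (0:ℝ) 1,
      (∑ i, z.ofLp.1 i * (q ε).ofLp.1 i) + (∑ i, z.ofLp.2 i * (q ε).ofLp.2 i) = 0 ∧
      Metric.infDist (q ε) Fz = ε ^ β ∧
      Metric.infDist (q ε) (PowCone m n α) ≤ (I.card : ℝ) * ε) ∧
    Filter.limsup
      (fun ε : ℝ => Metric.infDist (q ε) (PowCone m n α) ^ β / Metric.infDist (q ε) Fz)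
      (nhdsWithin 0 (Set.Ioi 0)) ≤ (I.card : ℝ) ^ β := by
  -- I is nonempty
  have hIne : I.Nonempty := by
    by_contra h
    rw [Finset.not_nonempty_iff_eq_empty] at h
    apply hzne
    have h2 : z.ofLp.2 = 0 := by
      refine WithLp.ofLp_injective 2 (funext fun i => ?_)
      have hi : i ∉ I := by simp [h]
      exact le_antisymm (le_of_not_gt (mt (hI i).mpr hi)) (hz2 i)
    exact WithLp.ofLp_injective 2 (Prod.ext hz1 h2)
  have hβpos : 0 < β := hβ ▸ Finset.sum_pos (fun i _ => (hα i).1) hIne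
  have hcard1 : (1:ℝ) ≤ (I.card : ℝ) := by
    exact_mod_cast Nat.one_le_iff_ne_zero.mpr (Finset.card_ne_zero_of_mem hIne.choose_spec)
  have key : ∀ ε ∈ Set.Ioo (0:ℝ) 1,
      (∑ i, z.ofLp.1 i * (q ε).ofLp.1 i) + (∑ i, z.ofLp.2 i * (q ε).ofLp.2 i) = 0 ∧
      Metric.infDist (q ε) Fz = ε ^ β ∧
      Metric.infDist (q ε) (PowCone m n α) ≤ (I.card : ℝ) * ε := by
    intro ε hε
    obtain ⟨hε0, hε1⟩ := hε
    have hq1' := hq1 ε ⟨hε0, hε1⟩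
    have hq2' := hq2 ε ⟨hε0, hε1⟩
    have hc : 0 < ε ^ β := Real.rpow_pos_of_pos hε0 β
    refine ⟨?_, ?_, ?_⟩
    · -- orthogonality
      have h1 : ∀ i, z.ofLp.1 i = 0 := fun i => by rw [hz1]; rfl
      have h2 : ∀ i, z.ofLp.2 i * (q ε).ofLp.2 i = 0 := by
        intro i
        by_cases hi : i ∈ I
        · rw [hq2' i, if_pos hi, mul_zero]
        · have hz0 : z.ofLp.2 i = 0 := le_antisymm (le_of_not_gt (mt (hI i).mpr hi)) (hz2 i)
          rw [hz0, zero_mul]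
      simp [h1, h2, -WithLp.ofLp_fst, -WithLp.ofLp_snd]
    · -- distance to Fz
      set p0 : E m n := WithLp.toLp 2 ((0 : EuclideanSpace ℝ (Fin m)), (q ε).ofLp.2) with hp0
      have hp0mem : p0 ∈ Fz := by
        rw [hFz]
        refine ⟨rfl, fun i => ?_, fun i hi => ?_⟩
        · show (0:ℝ) ≤ (q ε).ofLp.2 i
          rw [hq2' i]; split <;> norm_num
        · show (q ε).ofLp.2 i = 0
          rw [hq2' i, if_pos hi]
      have hnorm1 : ‖(q ε).ofLp.1‖ = ε ^ β := by
        rw [hq1', norm_smul, hu, mul_one, Real.norm_eq_abs, abs_of_pos hc]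
      have hdist : dist (q ε) p0 = ε ^ β := by
        rw [WithLp.prod_dist_eq_of_L2]
        have h1 : dist (q ε).fst p0.fst = ε ^ β := by
          show dist (q ε).ofLp.1 0 = _
          rw [dist_zero_right, hnorm1]
        have h2 : dist (q ε).snd p0.snd = 0 := dist_self _
        rw [h1, h2]
        rw [show (0:ℝ) ^ 2 = 0 by norm_num, add_zero, Real.sqrt_sq hc.le]
      have hlow : ∀ y ∈ Fz, ε ^ β ≤ dist (q ε) y := by
        intro y hy
        rw [hFz] at hy
        have h1 : dist (q ε).ofLp.1 y.ofLp.1 ≤ dist (q ε) y := by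
          rw [WithLp.prod_dist_eq_of_L2]
          calc dist (q ε).ofLp.1 y.ofLp.1 = Real.sqrt (dist (q ε).ofLp.1 y.ofLp.1 ^ 2) :=
                (Real.sqrt_sq dist_nonneg).symm
            _ ≤ _ := Real.sqrt_le_sqrt (le_add_of_nonneg_right (sq_nonneg _))
        have h2 : dist (q ε).ofLp.1 y.ofLp.1 = ε ^ β := by
          rw [hy.1, dist_zero_right, hnorm1]
        linarith
      refine le_antisymm ((Metric.infDist_le_dist_of_mem hp0mem).trans hdist.le) ?_
      by_contra h
      push_neg at h
      obtain ⟨y, hy, hdy⟩ := (Metric.infDist_lt_iff ⟨p0, hp0mem⟩).mp h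
      exact absurd hdy (not_lt.mpr (hlow y hy))
    · -- distance to the cone
      set p1 : E m n :=
        WithLp.toLp 2 ((q ε).ofLp.1, WithLp.toLp 2 (fun i => if i ∈ I then ε else 1 : Fin n → ℝ)) with hp1
      have hmem : p1 ∈ PowCone m n α := by
        constructor
        · intro i
          show (0:ℝ) ≤ if i ∈ I then ε else 1
          split <;> [exact hε0.le; norm_num]
        · show ‖(q ε).ofLp.1‖ ≤ ∏ i, (if i ∈ I then ε else (1:ℝ)) ^ α i
          have hprod : ∏ i, ((if i ∈ I then ε else (1:ℝ))) ^ α i = ε ^ β := by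
            rw [← Finset.prod_subset (Finset.subset_univ I)
              (fun i _ hi => by rw [if_neg hi, Real.one_rpow])]
            rw [Finset.prod_congr rfl (fun i hi => by rw [if_pos hi]),
              hβ, Real.rpow_sum_of_pos hε0]
          rw [hprod, hq1', norm_smul, hu, mul_one, Real.norm_eq_abs, abs_of_pos hc]
      have hdist : dist (q ε) p1 ≤ (I.card : ℝ) * ε := by
        rw [WithLp.prod_dist_eq_of_L2]
        have h1 : dist (q ε).fst p1.fst = 0 := dist_self _
        have h2 : dist (q ε).snd p1.snd = Real.sqrt ((I.card : ℝ) * ε ^ 2) := by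
          rw [EuclideanSpace.dist_eq]
          congr 1
          have : ∀ i, dist ((q ε).snd i) (p1.snd i) ^ 2 = if i ∈ I then ε ^ 2 else 0 := by
            intro i
            show dist ((q ε).ofLp.2 i) (if i ∈ I then ε else 1) ^ 2 = _
            rw [hq2' i]
            by_cases hi : i ∈ I <;> simp [hi, Real.dist_eq, abs_of_pos hε0]
          rw [Finset.sum_congr rfl fun i _ => this i, Finset.sum_ite_mem,
            Finset.univ_inter, Finset.sum_const, nsmul_eq_mul]
        rw [h1, h2]
        rw [show (0:ℝ) ^ 2 = 0 by norm_num, zero_add,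
          Real.sqrt_sq (Real.sqrt_nonneg _), Real.sqrt_mul (by positivity),
          Real.sqrt_sq hε0.le]
        have : Real.sqrt ((I.card : ℝ)) ≤ (I.card : ℝ) := by
          calc Real.sqrt ((I.card : ℝ)) ≤ Real.sqrt ((I.card : ℝ) ^ 2) :=
              Real.sqrt_le_sqrt (by nlinarith)
            _ = (I.card : ℝ) := Real.sqrt_sq (by positivity)
        nlinarith [hε0.le]
      exact (Metric.infDist_le_dist_of_mem hmem).trans hdist
  refine ⟨key, ?_⟩
  have hev : ∀ᶠ ε in nhdsWithin (0:ℝ) (Set.Ioi 0), ε ∈ Set.Ioo (0:ℝ) 1 :=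
    Ioo_mem_nhdsGT_of_mem (by constructor <;> norm_num)
  have hub : ∀ᶠ ε in nhdsWithin (0:ℝ) (Set.Ioi 0),
      Metric.infDist (q ε) (PowCone m n α) ^ β / Metric.infDist (q ε) Fz
        ≤ (I.card : ℝ) ^ β := by
    filter_upwards [hev] with ε hε
    obtain ⟨-, hFzd, hPd⟩ := key ε hε
    have hc : 0 < ε ^ β := Real.rpow_pos_of_pos hε.1 β
    rw [hFzd, div_le_iff₀ hc]
    calc Metric.infDist (q ε) (PowCone m n α) ^ β ≤ ((I.card : ℝ) * ε) ^ β :=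
        Real.rpow_le_rpow Metric.infDist_nonneg hPd hβpos.le
      _ = (I.card : ℝ) ^ β * ε ^ β := Real.mul_rpow (by positivity) hε.1.le
  refine Filter.limsup_le_of_le ?_ hub
  refine Filter.isCoboundedUnder_le_of_eventually_le _ (x := 0) ?_
  filter_upwards with ε
  exact div_nonneg (Real.rpow_nonneg Metric.infDist_nonneg _) Metric.infDist_nonneg
end
end

section
/- Let m ≥ 1, n > 2 with α ∈ (0,1)^n summing to 1, or n = 2 with α₁ ≠ α₂ and α₁ + α₂ = 1. If A is a block matrix [[B, 0],[0, E]] where E ∈ ℝ^{n×n} is a generalized permutation matrix with positive nonzero entries E_{k,l_k} satisfying α_{l_k} = α_k for each k, and B ∈ ℝ^{m×m} satisfies ‖Bx‖ = (∏_{k=1}^n E_{k,l_k}^{α_{l_k}})·‖x‖ for all x ∈ ℝ^m, then A is an automorphism of P^α_{m,n}, i.e., A is invertible and A(P^α_{m,n}) = P^α_{m,n}. -/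
open Finset

noncomputable section

/-- Sufficiency: a block-diagonal map `A = [[B,0],[0,E]]` with `E` a positive generalized
permutation matrix respecting `α` and `B` a suitable scaled isometry is an automorphism of
the generalized power cone. -/
theorem powCone_automorphism_sufficiency (m n : ℕ) (hm : 1 ≤ m) (hn : 2 ≤ n)
    (α : Fin n → ℝ) (hα : ∀ i, 0 < α i ∧ α i < 1) (hαsum : ∑ i, α i = 1)
    (hcase : 2 < n ∨ α ⟨0, by omega⟩ ≠ α ⟨1, by omega⟩)
    (B : EuclideanSpace ℝ (Fin m) →ₗ[ℝ] EuclideanSpace ℝ (Fin m))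
    (σ : Equiv.Perm (Fin n)) (d : Fin n → ℝ) (hd : ∀ k, 0 < d k)
    (hperm : ∀ k, α (σ k) = α k)
    (hB : ∀ x : EuclideanSpace ℝ (Fin m), ‖B x‖ = (∏ k, d k ^ α (σ k)) * ‖x‖)
    (A : E m n →ₗ[ℝ] E m n)
    (hA1 : ∀ x : E m n, (A x).ofLp.1 = B x.ofLp.1)
    (hA2 : ∀ x : E m n, ∀ k, (A x).ofLp.2 k = d k * x.ofLp.2 (σ k)) :
    Function.Bijective A ∧ ⇑A '' PowCone m n α = PowCone m n α := by
  set c : ℝ := ∏ k, d k ^ α (σ k) with hc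
  have hcpos : 0 < c := Finset.prod_pos fun k _ => Real.rpow_pos_of_pos (hd k) _
  -- product identity
  have hprod : ∀ x : E m n, (∀ i, 0 ≤ x.ofLp.2 i) →
      ∏ k, ((A x).ofLp.2 k) ^ α k = c * ∏ i, x.ofLp.2 i ^ α i := by
    intro x hx
    have : ∀ k, ((A x).ofLp.2 k) ^ α k = d k ^ α k * (x.ofLp.2 (σ k)) ^ α k := by
      intro k
      rw [hA2 x k, Real.mul_rpow (hd k).le (hx (σ k))]
    rw [Finset.prod_congr rfl fun k _ => this k, Finset.prod_mul_distrib]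
    congr 1
    · exact (Finset.prod_congr rfl fun k _ => by rw [hperm k]).symm
    · calc ∏ k, (x.ofLp.2 (σ k)) ^ α k = ∏ k, (x.ofLp.2 (σ k)) ^ α (σ k) :=
            Finset.prod_congr rfl fun k _ => by rw [hperm k]
        _ = ∏ i, x.ofLp.2 i ^ α i := Equiv.prod_comp σ (fun i => x.ofLp.2 i ^ α i)
  -- membership equivalence
  have key : ∀ x : E m n, x ∈ PowCone m n α ↔ A x ∈ PowCone m n α := by
    intro x
    constructor
    · rintro ⟨hx1, hx2⟩
      refine ⟨fun k => by rw [hA2 x k]; exact mul_nonneg (hd k).le (hx1 (σ k)), ?_⟩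
      rw [hA1, hB, hprod x hx1]
      exact mul_le_mul_of_nonneg_left hx2 hcpos.le
    · rintro ⟨hx1, hx2⟩
      have hx1' : ∀ i, 0 ≤ x.ofLp.2 i := by
        intro i
        have := hx1 (σ.symm i)
        rw [hA2 x (σ.symm i), Equiv.apply_symm_apply] at this
        exact nonneg_of_mul_nonneg_right this (hd _)
      refine ⟨hx1', ?_⟩
      rw [hA1, hB, hprod x hx1'] at hx2
      exact le_of_mul_le_mul_left hx2 hcpos
  -- injectivity
  have hBinj : Function.Injective B := by
    intro a b hab
    have : ‖B (a - b)‖ = 0 := by rw [map_sub, hab, sub_self, norm_zero]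
    rw [hB] at this
    have : ‖a - b‖ = 0 := by
      rcases mul_eq_zero.mp this with h | h
      · exact absurd h hcpos.ne'
      · exact h
    exact sub_eq_zero.mp (norm_eq_zero.mp this)
  have hinj : Function.Injective A := by
    rw [injective_iff_map_eq_zero]
    intro x hx
    have h1 : x.ofLp.1 = 0 := by
      apply hBinj
      rw [← hA1, hx, map_zero]
      simp
    have h2 : x.ofLp.2 = 0 := by
      ext i
      have := hA2 x (σ.symm i)
      rw [hx, Equiv.apply_symm_apply] at this
      have : d (σ.symm i) * x.ofLp.2 i = 0 := by simpa using this.symm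
      have := (mul_eq_zero.mp this).resolve_left (hd _).ne'
      simpa using this
    have : x = WithLp.toLp 2 (x.ofLp.1, x.ofLp.2) := rfl
    rw [this, h1, h2]; rfl
  have hbij : Function.Bijective A :=
    ⟨hinj, (LinearMap.injective_iff_surjective).mp hinj⟩
  refine ⟨hbij, ?_⟩
  ext y
  constructor
  · rintro ⟨x, hx, rfl⟩
    exact (key x).mp hx
  · intro hy
    obtain ⟨x, rfl⟩ := hbij.2 y
    exact ⟨x, (key x).mpr hy, rfl⟩
end
end

section
/- Let G ∈ ℝ^{m×m} and h ∈ ℝⁿ satisfy G + Gᵀ = 2(αᵀh)·I_m, where α ∈ (0,1)^n with ∑ αᵢ = 1. Then for every t ∈ ℝ, the matrix exponential e^{tG} satisfies ‖e^{tG} x‖ = ∏_{i=1}^n (e^{t hᵢ})^{αᵢ} · ‖x‖ for all x ∈ ℝ^m; consequently the block diagonal matrix [[e^{tG}, 0],[0, Diag(e^{th})]] maps P^α_{m,n} onto itself. -/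
open Finset

noncomputable section

/-- View a plain vector as an element of Euclidean space (the types are definitionally equal). -/
def toEuc {k : ℕ} (f : Fin k → ℝ) : EuclideanSpace ℝ (Fin k) := WithLp.toLp 2 f

/-- Build an element of the ambient space of the power cone from two plain vectors. -/
def mkE {m n : ℕ} (a : Fin m → ℝ) (b : Fin n → ℝ) : E m n := WithLp.toLp 2 (toEuc a, toEuc b)

open scoped Matrix

lemma norm_mulVec_orth {m : ℕ} (M : Matrix (Fin m) (Fin m) ℝ) (hM : Mᵀ * M = 1)
    (x : EuclideanSpace ℝ (Fin m)) : ‖toEuc (M.mulVec x.ofLp)‖ = ‖x‖ := by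
  have key : ∀ y : EuclideanSpace ℝ (Fin m), ‖y‖ ^ 2 = dotProduct y.ofLp y.ofLp := by
    intro y
    rw [← real_inner_self_eq_norm_sq]
    rw [real_inner_self_eq_norm_sq, EuclideanSpace.norm_sq_eq]
    simp [dotProduct, Real.norm_eq_abs, sq, abs_mul_abs_self]
  have hsq : ‖toEuc (M.mulVec x.ofLp)‖ ^ 2 = ‖x‖ ^ 2 := by
    rw [key, key]
    show dotProduct (M.mulVec x.ofLp) (M.mulVec x.ofLp) = dotProduct x.ofLp x.ofLp
    rw [Matrix.dotProduct_mulVec, ← Matrix.mulVec_transpose, Matrix.mulVec_mulVec, hM,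
      Matrix.one_mulVec]
  nlinarith [norm_nonneg (toEuc (M.mulVec x.ofLp)), norm_nonneg x]

lemma exp_norm_scale {m : ℕ} (c : ℝ) (G : Matrix (Fin m) (Fin m) ℝ)
    (hG : G + G.transpose = (2 * c) • (1 : Matrix (Fin m) (Fin m) ℝ)) (t : ℝ)
    (x : EuclideanSpace ℝ (Fin m)) :
    ‖toEuc ((NormedSpace.exp (t • G)).mulVec x.ofLp)‖ = Real.exp (t * c) * ‖x‖ := by
  set S : Matrix (Fin m) (Fin m) ℝ := t • G - (t * c) • 1 with hS
  have hGt : G.transpose = (2 * c) • (1 : Matrix (Fin m) (Fin m) ℝ) - G :=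
    eq_sub_of_add_eq' hG
  have hSt : Sᵀ = -S := by
    show (t • G - (t * c) • 1)ᵀ = -(t • G - (t * c) • 1)
    rw [Matrix.transpose_sub, Matrix.transpose_smul, Matrix.transpose_smul,
      Matrix.transpose_one, hGt]
    module
  have hdecomp : t • G = (t * c) • (1 : Matrix (Fin m) (Fin m) ℝ) + S := by
    rw [hS]; abel
  have hcomm : Commute ((t * c) • (1 : Matrix (Fin m) (Fin m) ℝ)) S := by
    apply Commute.smul_left
    exact Commute.one_left S
  have hexp : NormedSpace.exp (t • G)
      = NormedSpace.exp ((t * c) • (1 : Matrix (Fin m) (Fin m) ℝ)) * NormedSpace.exp S := by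
    rw [hdecomp]
    exact Matrix.exp_add_of_commute _ _ hcomm
  have hexp1 : NormedSpace.exp ((t * c) • (1 : Matrix (Fin m) (Fin m) ℝ))
      = Real.exp (t * c) • (1 : Matrix (Fin m) (Fin m) ℝ) := by
    rw [Matrix.smul_one_eq_diagonal, Matrix.exp_diagonal, Matrix.smul_one_eq_diagonal]
    have hfun : (NormedSpace.exp (fun _ : Fin m => t * c)) = fun _ : Fin m => Real.exp (t * c) := by
      rw [Pi.exp_def]
      funext i
      exact (congrFun Real.exp_eq_exp_ℝ _).symm
    rw [hfun]
  have horth : (NormedSpace.exp S)ᵀ * NormedSpace.exp S = 1 := by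
    rw [← Matrix.exp_transpose, hSt,
      ← Matrix.exp_add_of_commute _ _ (Commute.neg_left (Commute.refl S)), neg_add_cancel, NormedSpace.exp_zero]
  have : (NormedSpace.exp (t • G)).mulVec x.ofLp
      = Real.exp (t * c) • ((NormedSpace.exp S).mulVec x.ofLp) := by
    rw [hexp, hexp1, smul_mul_assoc, one_mul, Matrix.smul_mulVec]
  rw [this]
  have : toEuc (Real.exp (t * c) • ((NormedSpace.exp S).mulVec x.ofLp))
      = Real.exp (t * c) • toEuc ((NormedSpace.exp S).mulVec x.ofLp) := rfl
  rw [this, norm_smul, norm_mulVec_orth _ horth, Real.norm_eq_abs,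
    abs_of_pos (Real.exp_pos _)]

lemma prod_exp_rpow {n : ℕ} (α h : Fin n → ℝ) (t : ℝ) :
    ∏ i, Real.exp (t * h i) ^ α i = Real.exp (t * ∑ i, α i * h i) := by
  calc ∏ i, Real.exp (t * h i) ^ α i = ∏ i, Real.exp (t * h i * α i) := by
        refine Finset.prod_congr rfl fun i _ => ?_
        rw [Real.rpow_def_of_pos (Real.exp_pos _), Real.log_exp]
    _ = Real.exp (∑ i, t * h i * α i) := (Real.exp_sum _ _).symm
    _ = Real.exp (t * ∑ i, α i * h i) := by
        rw [Finset.mul_sum]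
        congr 1
        exact Finset.sum_congr rfl fun i _ => by ring

lemma powCone_step {m n : ℕ} (α : Fin n → ℝ)
    (G : Matrix (Fin m) (Fin m) ℝ) (h : Fin n → ℝ)
    (hG : G + G.transpose = (2 * ∑ i, α i * h i) • (1 : Matrix (Fin m) (Fin m) ℝ))
    (t' : ℝ) (x : E m n) (hx : x ∈ PowCone m n α) :
    mkE ((NormedSpace.exp (t' • G)).mulVec x.ofLp.1.ofLp)
      (fun i => Real.exp (t' * h i) * x.ofLp.2 i) ∈ PowCone m n α := by
  obtain ⟨hx1, hx2⟩ := hx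
  constructor
  · intro i
    exact mul_nonneg (Real.exp_pos _).le (hx1 i)
  · show ‖toEuc ((NormedSpace.exp (t' • G)).mulVec x.ofLp.1.ofLp)‖ ≤
      ∏ i, (Real.exp (t' * h i) * x.ofLp.2 i) ^ α i
    rw [exp_norm_scale _ G hG t' x.ofLp.1]
    have hprod : ∏ i, (Real.exp (t' * h i) * x.ofLp.2 i) ^ α i
        = Real.exp (t' * ∑ i, α i * h i) * ∏ i, x.ofLp.2 i ^ α i := by
      rw [← prod_exp_rpow α h t', ← Finset.prod_mul_distrib]
      exact Finset.prod_congr rfl fun i _ =>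
        Real.mul_rpow (Real.exp_pos _).le (hx1 i)
    rw [hprod]
    exact mul_le_mul_of_nonneg_left hx2 (Real.exp_pos _).le

/-- If `G + Gᵀ = 2(αᵀh) I`, then `e^{tG}` scales norms by `∏ (e^{t hᵢ})^{αᵢ}` and the block
diagonal map `[[e^{tG},0],[0,Diag(e^{th})]]` maps the power cone onto itself. -/
theorem powCone_lie_algebra_exp (m n : ℕ) (hm : 1 ≤ m) (hn : 2 ≤ n)
    (α : Fin n → ℝ) (hα : ∀ i, 0 < α i ∧ α i < 1) (hαsum : ∑ i, α i = 1)
    (G : Matrix (Fin m) (Fin m) ℝ) (h : Fin n → ℝ)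
    (hG : G + G.transpose = (2 * ∑ i, α i * h i) • (1 : Matrix (Fin m) (Fin m) ℝ))
    (t : ℝ) :
    (∀ x : EuclideanSpace ℝ (Fin m),
      ‖toEuc ((NormedSpace.exp (t • G)).mulVec x.ofLp)‖ =
        (∏ i, Real.exp (t * h i) ^ α i) * ‖x‖) ∧
    (fun x : E m n =>
        mkE ((NormedSpace.exp (t • G)).mulVec x.ofLp.1.ofLp)
          (fun i => Real.exp (t * h i) * x.ofLp.2 i)) '' PowCone m n α = PowCone m n α := by
  constructor
  · intro x
    rw [exp_norm_scale _ G hG t x, prod_exp_rpow α h t]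
  · refine Set.Subset.antisymm ?_ ?_
    · rintro _ ⟨x, hx, rfl⟩
      exact powCone_step α G h hG t x hx
    · intro y hy
      refine ⟨mkE ((NormedSpace.exp ((-t) • G)).mulVec y.ofLp.1.ofLp)
        (fun i => Real.exp ((-t) * h i) * y.ofLp.2 i), powCone_step α G h hG (-t) y hy, ?_⟩
      have h1 : (NormedSpace.exp (t • G)) * (NormedSpace.exp ((-t) • G)) = 1 := by
        rw [← Matrix.exp_add_of_commute _ _ (((Commute.refl G).smul_left t).smul_right (-t))]
        have h0 : t • G + (-t) • G = 0 := by module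
        rw [h0, NormedSpace.exp_zero]
      show mkE _ _ = y
      have hfst : toEuc ((NormedSpace.exp (t • G)).mulVec
          ((mkE ((NormedSpace.exp ((-t) • G)).mulVec y.ofLp.1.ofLp)
            (fun i => Real.exp ((-t) * h i) * y.ofLp.2 i)).ofLp.1.ofLp)) = y.ofLp.1 := by
        show toEuc ((NormedSpace.exp (t • G)).mulVec
          ((NormedSpace.exp ((-t) • G)).mulVec y.ofLp.1.ofLp)) = toEuc y.ofLp.1.ofLp
        rw [Matrix.mulVec_mulVec, h1, Matrix.one_mulVec]
      have hsnd : toEuc (fun i => Real.exp (t * h i) *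
          ((mkE ((NormedSpace.exp ((-t) • G)).mulVec y.ofLp.1.ofLp)
            (fun i => Real.exp ((-t) * h i) * y.ofLp.2 i)).ofLp.2 i)) = y.ofLp.2 := by
        ext i
        show Real.exp (t * h i) * (Real.exp ((-t) * h i) * y.ofLp.2 i) = y.ofLp.2 i
        rw [← mul_assoc, ← Real.exp_add]
        norm_num
      apply WithLp.ofLp_injective 2
      exact Prod.ext hfst hsnd
end
end

section
/- The generalized power cone P^α_{m,n} (m ≥ 1, n ≥ 2, α ∈ (0,1)^n with ∑ αᵢ = 1) is irreducible: it cannot be written as K₁ + K₂ with K₁, K₂ ≠ {0} subsets of P^α_{m,n} and span(K₁) ∩ span(K₂) = {0}. -/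
open Finset

noncomputable section

namespace PowConeAux

variable {m n : ℕ} {α : Fin n → ℝ}

lemma E_ext {x y : E m n} (h1 : x.ofLp.1 = y.ofLp.1) (h2 : x.ofLp.2 = y.ofLp.2) : x = y :=
  WithLp.ofLp_injective 2 (Prod.ext h1 h2)

lemma sum_fst {ι : Type*} (s : Finset ι) (f : ι → E m n) :
    (∑ i ∈ s, f i).ofLp.1 = ∑ i ∈ s, (f i).ofLp.1 := by rw [WithLp.ofLp_sum, Prod.fst_sum]

lemma sum_snd {ι : Type*} (s : Finset ι) (f : ι → E m n) :
    (∑ i ∈ s, f i).ofLp.2 = ∑ i ∈ s, (f i).ofLp.2 := by rw [WithLp.ofLp_sum, Prod.snd_sum]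

lemma euc_sum_apply {ι : Type*} {N : ℕ} (s : Finset ι) (f : ι → EuclideanSpace ℝ (Fin N))
    (j : Fin N) : (∑ i ∈ s, f i) j = ∑ i ∈ s, f i j :=
  by rw [WithLp.ofLp_sum, Finset.sum_apply]

lemma prod_eq_zero_of_coord (hα : ∀ i, 0 < α i ∧ α i < 1) {w : EuclideanSpace ℝ (Fin n)}
    {j : Fin n} (hj : w j = 0) : ∏ i, w i ^ α i = 0 :=
  Finset.prod_eq_zero (Finset.mem_univ j) (by rw [hj]; exact Real.zero_rpow (hα j).1.ne')

lemma fst_eq_zero (hα : ∀ i, 0 < α i ∧ α i < 1) {x : E m n} (hx : x ∈ PowCone m n α)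
    {j : Fin n} (hj : x.ofLp.2 j = 0) : x.ofLp.1 = 0 := by
  have h2 := hx.2
  rw [prod_eq_zero_of_coord hα hj] at h2
  exact norm_le_zero_iff.mp h2

lemma pointed (hα : ∀ i, 0 < α i ∧ α i < 1) (hn : 0 < n) {x : E m n}
    (hx : x ∈ PowCone m n α) (hx' : -x ∈ PowCone m n α) : x = 0 := by
  have hcoord : ∀ j, x.ofLp.2 j = 0 := by
    intro j
    have h1 := hx.1 j
    have h2 : (0:ℝ) ≤ -(x.ofLp.2 j) := hx'.1 j
    linarith
  refine E_ext ?_ (PiLp.ext fun j => hcoord j)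
  exact fst_eq_zero hα hx (hcoord ⟨0, hn⟩)

def fvec (m n : ℕ) (k : Fin m) : E m n := WithLp.toLp 2 (EuclideanSpace.single k 1, 0)

def onevec (m n : ℕ) : E m n := WithLp.toLp 2 (0, WithLp.toLp 2 fun _ => 1)

end PowConeAux

open PowConeAux

open Pointwise in
/-- The generalized power cone is irreducible. -/
theorem powCone_irreducible (m n : ℕ) (hm : 1 ≤ m) (hn : 2 ≤ n) (α : Fin n → ℝ)
    (hα : ∀ i, 0 < α i ∧ α i < 1) (hαsum : ∑ i, α i = 1) :
    ¬ ∃ K₁ K₂ : Set (E m n),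
        K₁ ⊆ PowCone m n α ∧ K₂ ⊆ PowCone m n α ∧
        K₁ ≠ {0} ∧ K₂ ≠ {0} ∧
        PowCone m n α = K₁ + K₂ ∧
        Submodule.span ℝ K₁ ⊓ Submodule.span ℝ K₂ = ⊥ := by
  rintro ⟨K₁, K₂, hK₁K, hK₂K, hne₁, hne₂, hsum, hspan⟩
  have hn0 : 0 < n := by omega
  have hntr : Nontrivial (Fin n) := Fin.nontrivial_iff_two_le.mpr hn
  set V₁ := Submodule.span ℝ K₁ with hV₁
  set V₂ := Submodule.span ℝ K₂ with hV₂
  -- trivial intersection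
  have hV : ∀ x : E m n, x ∈ V₁ → x ∈ V₂ → x = 0 := by
    intro x h1 h2
    have hx : x ∈ V₁ ⊓ V₂ := ⟨h1, h2⟩
    rw [hspan] at hx
    simpa using hx
  have hs₁ : K₁ ⊆ (V₁ : Set (E m n)) := Submodule.subset_span
  have hs₂ : K₂ ⊆ (V₂ : Set (E m n)) := Submodule.subset_span
  -- uniqueness of decompositions
  have huniq : ∀ a a' b b' : E m n, a ∈ V₁ → a' ∈ V₁ → b ∈ V₂ → b' ∈ V₂ →
      a + b = a' + b' → a = a' ∧ b = b' := by
    intro a a' b b' ha ha' hb hb' h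
    have h1 : a - a' ∈ V₁ := Submodule.sub_mem _ ha ha'
    have h2 : a - a' ∈ V₂ := by
      have he : a - a' = b' - b := by
        rw [sub_eq_sub_iff_add_eq_add, h]
        exact add_comm _ _
      rw [he]
      exact Submodule.sub_mem _ hb' hb
    have h0 : a = a' := sub_eq_zero.mp (hV _ h1 h2)
    refine ⟨h0, ?_⟩
    rw [h0] at h
    exact add_left_cancel h
  -- 0 belongs to the cone
  have h0K : (0 : E m n) ∈ PowCone m n α := by
    refine ⟨fun i => le_refl 0, ?_⟩
    rw [show ((0 : E m n).ofLp.1) = 0 from rfl, norm_zero]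
    exact Finset.prod_nonneg fun i _ => Real.rpow_nonneg le_rfl _
  -- 0 belongs to K₁ and K₂
  obtain ⟨z₁, hz₁, z₂, hz₂, hz⟩ := Set.mem_add.mp (by rw [hsum] at h0K; exact h0K)
  have hz₁0 : z₁ = 0 := by
    refine hV _ (hs₁ hz₁) ?_
    have hzz : z₁ = -z₂ := eq_neg_of_add_eq_zero_left hz
    rw [hzz]
    exact Submodule.neg_mem _ (hs₂ hz₂)
  have hz₂0 : z₂ = 0 := by rw [hz₁0, zero_add] at hz; exact hz
  have h0₁ : (0 : E m n) ∈ K₁ := hz₁0 ▸ hz₁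
  have h0₂ : (0 : E m n) ∈ K₂ := hz₂0 ▸ hz₂
  -- decomposition of cone elements
  have hdec : ∀ x ∈ PowCone m n α, ∃ a ∈ K₁, ∃ b ∈ K₂, a + b = x := by
    intro x hx
    rw [hsum] at hx
    exact Set.mem_add.mp hx
  -- special points
  set e : Fin n → E m n := fun i => (WithLp.toLp 2 (0, EuclideanSpace.single i 1) : E m n) with he_def
  set pp : EuclideanSpace ℝ (Fin m) → E m n := fun ω => (WithLp.toLp 2 (ω, WithLp.toLp 2 fun _ => 1) : E m n) with hpp_def
  have he2 : ∀ i j, (e i).ofLp.2 j = if j = i then 1 else 0 := fun i j =>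
    EuclideanSpace.single_apply i 1 j
  have he1 : ∀ i, (e i).ofLp.1 = 0 := fun i => rfl
  have heK : ∀ i, e i ∈ PowCone m n α := by
    intro i
    refine ⟨fun j => ?_, ?_⟩
    · rw [show (0:ℝ) ≤ (e i).ofLp.2 j ↔ 0 ≤ if j = i then (1:ℝ) else 0 by rw [he2]]
      split <;> norm_num
    · rw [he1, norm_zero]
      refine Finset.prod_nonneg fun j _ => Real.rpow_nonneg ?_ _
      rw [he2]
      split <;> norm_num
  have heNe : ∀ i, e i ≠ 0 := by
    intro i h
    have h2 : (e i).ofLp.2 i = (0 : E m n).ofLp.2 i := congrArg (fun z : E m n => z.ofLp.2 i) h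
    rw [he2, if_pos rfl] at h2
    exact one_ne_zero h2
  have hppK : ∀ ω : EuclideanSpace ℝ (Fin m), ‖ω‖ = 1 → pp ω ∈ PowCone m n α := by
    intro ω hω
    refine ⟨fun i => zero_le_one, ?_⟩
    rw [show ‖(pp ω).ofLp.1‖ = ‖ω‖ from rfl, hω]
    rw [show (∏ i, (pp ω).ofLp.2 i ^ α i) = ∏ i, (1:ℝ) ^ α i from rfl]
    simp [Real.one_rpow]
  -- extremality of the e i
  have hext : ∀ (i : Fin n) (u v : E m n), u ∈ PowCone m n α → v ∈ PowCone m n α →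
      u ∈ V₁ → v ∈ V₂ → u + v = e i → (u = 0 ∧ v = e i) ∨ (u = e i ∧ v = 0) := by
    intro i u v hu hv hu1 hv2 huv
    have hsum2 : ∀ j, u.ofLp.2 j + v.ofLp.2 j = (if j = i then 1 else 0) := by
      intro j
      have h : (u + v).ofLp.2 j = (e i).ofLp.2 j := congrArg (fun z : E m n => z.ofLp.2 j) huv
      rw [he2] at h
      exact h
    have hucoord : ∀ j', j' ≠ i → u.ofLp.2 j' = 0 := by
      intro j' hj'
      have h1 := hsum2 j'
      rw [if_neg hj'] at h1
      have h2 := hu.1 j'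
      have h3 := hv.1 j'
      linarith
    have hvcoord : ∀ j', j' ≠ i → v.ofLp.2 j' = 0 := by
      intro j' hj'
      have h1 := hsum2 j'
      rw [if_neg hj'] at h1
      have h2 := hu.1 j'
      have h3 := hv.1 j'
      linarith
    obtain ⟨j, hj⟩ := exists_ne i
    have hu1z : u.ofLp.1 = 0 := fst_eq_zero hα hu (hucoord j hj)
    have hv1z : v.ofLp.1 = 0 := fst_eq_zero hα hv (hvcoord j hj)
    set t := u.ofLp.2 i with ht_def
    set s := v.ofLp.2 i with hs_def
    have hu_eq : u = t • e i := by
      refine E_ext ?_ ?_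
      · rw [hu1z]
        show (0 : EuclideanSpace ℝ (Fin m)) = t • (0 : EuclideanSpace ℝ (Fin m))
        rw [smul_zero]
      · ext j'
        show u.ofLp.2 j' = t * (e i).ofLp.2 j'
        rw [he2]
        by_cases hji : j' = i
        · rw [if_pos hji, mul_one, hji]
        · rw [if_neg hji, mul_zero, hucoord j' hji]
    have hv_eq : v = s • e i := by
      refine E_ext ?_ ?_
      · rw [hv1z]
        show (0 : EuclideanSpace ℝ (Fin m)) = s • (0 : EuclideanSpace ℝ (Fin m))
        rw [smul_zero]
      · ext j'
        show v.ofLp.2 j' = s * (e i).ofLp.2 j'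
        rw [he2]
        by_cases hji : j' = i
        · rw [if_pos hji, mul_one, hji]
        · rw [if_neg hji, mul_zero, hvcoord j' hji]
    by_cases ht : t = 0
    · left
      constructor
      · rw [hu_eq, ht, zero_smul]
      · rw [hu_eq, ht, zero_smul] at huv
        rw [← huv, zero_add]
    · by_cases hs : s = 0
      · right
        constructor
        · rw [hv_eq, hs, zero_smul] at huv
          rw [← huv, add_zero]
        · rw [hv_eq, hs, zero_smul]
      · exfalso
        have hei1 : e i ∈ V₁ := by
          have he1' : e i = t⁻¹ • u := by
            rw [hu_eq, smul_smul, inv_mul_cancel₀ ht, one_smul]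
          rw [he1']
          exact Submodule.smul_mem _ _ hu1
        have hei2 : e i ∈ V₂ := by
          have he2' : e i = s⁻¹ • v := by
            rw [hv_eq, smul_smul, inv_mul_cancel₀ hs, one_smul]
          rw [he2']
          exact Submodule.smul_mem _ _ hv2
        exact heNe i (hV _ hei1 hei2)
  -- decompose the e i
  choose a ha₁ b hb₂ hab using fun i : Fin n => hdec (e i) (heK i)
  have hcase : ∀ i, (a i = 0 ∧ b i = e i) ∨ (a i = e i ∧ b i = 0) := fun i =>
    hext i (a i) (b i) (hK₁K (ha₁ i)) (hK₂K (hb₂ i)) (hs₁ (ha₁ i)) (hs₂ (hb₂ i)) (hab i)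
  -- decompose the pp points
  have hnormf : ∀ k : Fin m, ‖EuclideanSpace.single k (1:ℝ)‖ = 1 := by
    intro k
    rw [EuclideanSpace.norm_single, norm_one]
  have hnormf' : ∀ k : Fin m, ‖-EuclideanSpace.single k (1:ℝ)‖ = 1 := by
    intro k
    rw [norm_neg]; exact hnormf k
  choose u hu₁ v hv₂ huv using fun k : Fin m =>
    hdec (pp (EuclideanSpace.single k 1)) (hppK _ (hnormf k))
  choose u' hu'₁ v' hv'₂ hu'v' using fun k : Fin m =>
    hdec (pp (-EuclideanSpace.single k 1)) (hppK _ (hnormf' k))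
  -- sum of all e i
  have hone : (∑ i, e i) = onevec m n := by
    refine E_ext ?_ ?_
    · rw [sum_fst]
      exact Finset.sum_eq_zero fun i _ => he1 i
    · rw [sum_snd]
      ext j
      rw [euc_sum_apply]
      show (∑ i, (e i).ofLp.2 j) = 1
      calc ∑ i, (e i).ofLp.2 j = ∑ i, if j = i then (1:ℝ) else 0 :=
            Finset.sum_congr rfl fun i _ => he2 i j
        _ = 1 := by rw [Finset.sum_ite_eq univ j (fun _ => (1:ℝ))]; simp
  -- key identities
  have hkey : ∀ k : Fin m, (u k + u' k = (∑ i, a i) + (∑ i, a i)) ∧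
      (v k + v' k = (∑ i, b i) + (∑ i, b i)) := by
    intro k
    have hmemA : u k + u' k ∈ V₁ := Submodule.add_mem _ (hs₁ (hu₁ k)) (hs₁ (hu'₁ k))
    have hmemA' : (∑ i, a i) + (∑ i, a i) ∈ V₁ :=
      Submodule.add_mem _ (Submodule.sum_mem _ fun i _ => hs₁ (ha₁ i))
        (Submodule.sum_mem _ fun i _ => hs₁ (ha₁ i))
    have hmemB : v k + v' k ∈ V₂ := Submodule.add_mem _ (hs₂ (hv₂ k)) (hs₂ (hv'₂ k))
    have hmemB' : (∑ i, b i) + (∑ i, b i) ∈ V₂ :=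
      Submodule.add_mem _ (Submodule.sum_mem _ fun i _ => hs₂ (hb₂ i))
        (Submodule.sum_mem _ fun i _ => hs₂ (hb₂ i))
    have heq : (u k + u' k) + (v k + v' k)
        = ((∑ i, a i) + (∑ i, a i)) + ((∑ i, b i) + (∑ i, b i)) := by
      have h1 : (u k + u' k) + (v k + v' k)
          = pp (EuclideanSpace.single k 1) + pp (-EuclideanSpace.single k 1) := by
        rw [← huv k, ← hu'v' k]; abel
      have h2 : pp (EuclideanSpace.single k 1) + pp (-EuclideanSpace.single k 1)
          = (∑ i, e i) + (∑ i, e i) := by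
        rw [hone]
        refine E_ext ?_ ?_
        · show EuclideanSpace.single k (1:ℝ) + -EuclideanSpace.single k 1
            = (0 : EuclideanSpace ℝ (Fin m)) + 0
          rw [add_neg_cancel, add_zero]
        · rfl
      have h3 : (∑ i, a i) + (∑ i, b i) = ∑ i, e i := by
        rw [← Finset.sum_add_distrib]
        exact Finset.sum_congr rfl fun i _ => hab i
      rw [h1, h2, ← h3]
      abel
    exact huniq _ _ _ _ hmemA hmemA' hmemB hmemB' heq
  -- representation of arbitrary vectors
  have hrepr : ∀ x : E m n, x = (∑ k, x.ofLp.1 k • fvec m n k)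
      + ∑ i, x.ofLp.2 i • e i := by
    intro x
    refine E_ext ?_ ?_
    · rw [show ((∑ k, x.ofLp.1 k • fvec m n k)
          + ∑ i, x.ofLp.2 i • e i).ofLp.1
        = (∑ k, x.ofLp.1 k • fvec m n k).ofLp.1
          + (∑ i, x.ofLp.2 i • e i).ofLp.1 from rfl, sum_fst, sum_fst]
      have hz : (∑ i, ((x.ofLp.2 i • e i).ofLp.1)) = 0 :=
        Finset.sum_eq_zero fun i _ => by
          show x.ofLp.2 i • (e i).ofLp.1 = 0
          rw [he1, smul_zero]
      rw [hz, add_zero]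
      ext l
      rw [euc_sum_apply]
      calc x.ofLp.1 l = ∑ k, (if l = k then x.ofLp.1 k else 0) := by
            rw [Finset.sum_ite_eq univ l (fun k => x.ofLp.1 k)]
            simp
        _ = ∑ k, (x.ofLp.1 k • fvec m n k).ofLp.1 l :=
            Finset.sum_congr rfl fun k _ => by
              show (if l = k then x.ofLp.1 k else 0) = x.ofLp.1 k * EuclideanSpace.single k (1:ℝ) l
              rw [EuclideanSpace.single_apply]
              split
              · rw [mul_one]
              · rw [mul_zero]
    · rw [show ((∑ k, x.ofLp.1 k • fvec m n k)
          + ∑ i, x.ofLp.2 i • e i).ofLp.2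
        = (∑ k, x.ofLp.1 k • fvec m n k).ofLp.2
          + (∑ i, x.ofLp.2 i • e i).ofLp.2 from rfl, sum_snd, sum_snd]
      have hz : (∑ k, ((x.ofLp.1 k • fvec m n k).ofLp.2)) = 0 :=
        Finset.sum_eq_zero fun k _ => by
          show x.ofLp.1 k • (0 : EuclideanSpace ℝ (Fin n)) = 0
          rw [smul_zero]
      rw [hz, zero_add]
      ext j
      rw [euc_sum_apply]
      calc x.ofLp.2 j = ∑ i, (if j = i then x.ofLp.2 i else 0) := by
            rw [Finset.sum_ite_eq univ j (fun i => x.ofLp.2 i)]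
            simp
        _ = ∑ i, (x.ofLp.2 i • e i).ofLp.2 j :=
            Finset.sum_congr rfl fun i _ => by
              show (if j = i then x.ofLp.2 i else 0) = x.ofLp.2 i * (e i).ofLp.2 j
              rw [he2]
              split
              · rw [mul_one]
              · rw [mul_zero]
  -- the "one" vector used later
  -- case analysis
  by_cases hall1 : ∀ i, a i = e i
  · -- all e i in K₁; show K₂ = {0}
    have hb0 : ∀ i, b i = 0 := by
      intro i
      rcases hcase i with ⟨h, _⟩ | ⟨_, h⟩
      · exact absurd (by rw [← hall1 i, h]) (heNe i)
      · exact h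
    have hsumb : (∑ i, b i) = 0 := Finset.sum_eq_zero fun i _ => hb0 i
    have hv0 : ∀ k : Fin m, v k = 0 := by
      intro k
      have h := (hkey k).2
      rw [hsumb, add_zero] at h
      have h2 : v' k = -(v k) := eq_neg_of_add_eq_zero_right h
      have hvk : -(v k) ∈ PowCone m n α := by
        rw [← h2]
        exact hK₂K (hv'₂ k)
      exact pointed hα hn0 (hK₂K (hv₂ k)) hvk
    have hppV₁ : ∀ k : Fin m, pp (EuclideanSpace.single k 1) ∈ V₁ := by
      intro k
      have h := huv k
      rw [hv0 k, add_zero] at h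
      rw [← h]
      exact hs₁ (hu₁ k)
    have heV₁ : ∀ i, e i ∈ V₁ := fun i => by rw [← hall1 i]; exact hs₁ (ha₁ i)
    have honeV₁ : onevec m n ∈ V₁ := by
      rw [← hone]
      exact Submodule.sum_mem _ fun i _ => heV₁ i
    have hfV₁ : ∀ k : Fin m, fvec m n k ∈ V₁ := by
      intro k
      have h : fvec m n k
          = pp (EuclideanSpace.single k 1) - onevec m n := by
        refine E_ext ?_ ?_
        · show EuclideanSpace.single k (1:ℝ) = EuclideanSpace.single k 1 - 0
          rw [sub_zero]
        · show (0 : EuclideanSpace ℝ (Fin n)) = (WithLp.toLp 2 fun _ => (1:ℝ)) - (WithLp.toLp 2 fun _ => (1:ℝ))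
          rw [sub_self]
      rw [h]
      exact Submodule.sub_mem _ (hppV₁ k) honeV₁
    have htop : ∀ x : E m n, x ∈ V₁ := by
      intro x
      rw [hrepr x]
      refine Submodule.add_mem _ ?_ ?_
      · exact Submodule.sum_mem _ fun k _ => Submodule.smul_mem _ _ (hfV₁ k)
      · exact Submodule.sum_mem _ fun i _ => Submodule.smul_mem _ _ (heV₁ i)
    apply hne₂
    refine Set.eq_singleton_iff_unique_mem.mpr ⟨h0₂, ?_⟩
    intro y hy
    exact hV y (htop y) (hs₂ hy)
  · by_cases hall0 : ∀ i, a i = 0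
    · -- all e i in K₂; show K₁ = {0}
      have hb1 : ∀ i, b i = e i := by
        intro i
        rcases hcase i with ⟨_, h⟩ | ⟨h, _⟩
        · exact h
        · exact absurd (by rw [← h, hall0 i]) (heNe i)
      have hsuma : (∑ i, a i) = 0 := Finset.sum_eq_zero fun i _ => hall0 i
      have hu0 : ∀ k : Fin m, u k = 0 := by
        intro k
        have h := (hkey k).1
        rw [hsuma, add_zero] at h
        have h2 : u' k = -(u k) := eq_neg_of_add_eq_zero_right h
        have huk : -(u k) ∈ PowCone m n α := by
          rw [← h2]
          exact hK₁K (hu'₁ k)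
        exact pointed hα hn0 (hK₁K (hu₁ k)) huk
      have hppV₂ : ∀ k : Fin m, pp (EuclideanSpace.single k 1) ∈ V₂ := by
        intro k
        have h := huv k
        rw [hu0 k, zero_add] at h
        rw [← h]
        exact hs₂ (hv₂ k)
      have heV₂ : ∀ i, e i ∈ V₂ := fun i => by rw [← hb1 i]; exact hs₂ (hb₂ i)
      have honeV₂ : onevec m n ∈ V₂ := by
        rw [← hone]
        exact Submodule.sum_mem _ fun i _ => heV₂ i
      have hfV₂ : ∀ k : Fin m, fvec m n k ∈ V₂ := by
        intro k
        have h : fvec m n k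
            = pp (EuclideanSpace.single k 1) - onevec m n := by
          refine E_ext ?_ ?_
          · show EuclideanSpace.single k (1:ℝ) = EuclideanSpace.single k 1 - 0
            rw [sub_zero]
          · show (0 : EuclideanSpace ℝ (Fin n)) = (WithLp.toLp 2 fun _ => (1:ℝ)) - (WithLp.toLp 2 fun _ => (1:ℝ))
            rw [sub_self]
        rw [h]
        exact Submodule.sub_mem _ (hppV₂ k) honeV₂
      have htop : ∀ x : E m n, x ∈ V₂ := by
        intro x
        rw [hrepr x]
        refine Submodule.add_mem _ ?_ ?_
        · exact Submodule.sum_mem _ fun k _ => Submodule.smul_mem _ _ (hfV₂ k)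
        · exact Submodule.sum_mem _ fun i _ => Submodule.smul_mem _ _ (heV₂ i)
      apply hne₁
      refine Set.eq_singleton_iff_unique_mem.mpr ⟨h0₁, ?_⟩
      intro y hy
      exact hV y (hs₁ hy) (htop y)
    · -- mixed case: contradiction
      push_neg at hall1 hall0
      obtain ⟨j, hj⟩ := hall1
      obtain ⟨i, hi⟩ := hall0
      have haj : a j = 0 ∧ b j = e j := by
        rcases hcase j with h | h
        · exact h
        · exact absurd h.1 hj
      have hai : a i = e i ∧ b i = 0 := by
        rcases hcase i with h | h
        · exact absurd h.1 hi
        · exact h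
      set k0 : Fin m := ⟨0, hm⟩ with hk0
      have hAj : (∑ l, a l).ofLp.2 j = 0 := by
        rw [sum_snd, euc_sum_apply]
        refine Finset.sum_eq_zero fun l _ => ?_
        rcases hcase l with ⟨h, _⟩ | ⟨h, _⟩
        · rw [h]; rfl
        · have hne : j ≠ l := by
            rintro rfl
            exact heNe _ (h ▸ haj.1)
          rw [h, he2, if_neg hne]
      have hBi : (∑ l, b l).ofLp.2 i = 0 := by
        rw [sum_snd, euc_sum_apply]
        refine Finset.sum_eq_zero fun l _ => ?_
        rcases hcase l with ⟨_, h⟩ | ⟨_, h⟩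
        · have hne : i ≠ l := by
            rintro rfl
            exact heNe _ (h ▸ hai.2)
          rw [h, he2, if_neg hne]
        · rw [h]; rfl
      have hu2j : (u k0).ofLp.2 j = 0 := by
        have h' : (u k0).ofLp.2 j + (u' k0).ofLp.2 j = (∑ l, a l).ofLp.2 j + (∑ l, a l).ofLp.2 j :=
          congrArg (fun z : E m n => z.ofLp.2 j) (hkey k0).1
        rw [hAj] at h'
        have h1 := (hK₁K (hu₁ k0)).1 j
        have h2 := (hK₁K (hu'₁ k0)).1 j
        linarith
      have hv2i : (v k0).ofLp.2 i = 0 := by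
        have h' : (v k0).ofLp.2 i + (v' k0).ofLp.2 i = (∑ l, b l).ofLp.2 i + (∑ l, b l).ofLp.2 i :=
          congrArg (fun z : E m n => z.ofLp.2 i) (hkey k0).2
        rw [hBi] at h'
        have h1 := (hK₂K (hv₂ k0)).1 i
        have h2 := (hK₂K (hv'₂ k0)).1 i
        linarith
      have hu1z : (u k0).ofLp.1 = 0 := fst_eq_zero hα (hK₁K (hu₁ k0)) hu2j
      have hv1z : (v k0).ofLp.1 = 0 := fst_eq_zero hα (hK₂K (hv₂ k0)) hv2i
      have hcontr : EuclideanSpace.single k0 (1:ℝ) = 0 := by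
        have h' : (u k0).ofLp.1 + (v k0).ofLp.1 = EuclideanSpace.single k0 (1:ℝ) :=
          congrArg (fun z : E m n => z.ofLp.1) (huv k0)
        rw [hu1z, hv1z, add_zero] at h'
        exact h'.symm
      have h1 : EuclideanSpace.single k0 (1:ℝ) k0 = 0 :=
        congrArg (fun w : EuclideanSpace ℝ (Fin m) => w k0) hcontr
      rw [EuclideanSpace.single_apply, if_pos rfl] at h1
      exact one_ne_zero h1
end
end
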